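/- arXiv:2409.04400 — 5 statements merged into one kernel-verified Lean document; each statement's English description precedes it below -/
import Mathlib

section
/- Let (A, I) be a transversal prism (A a δ-ring with Frobenius lift φ, I an invertible ideal with (A,I) a prism, and A/I p-torsion-free), and r ≥ 1. Set J_r = I·(I·φ(I)···φ^{r-1}(I))^{p-1}. Then the image of the ideal (φ^r)(I) in the quotient ring A/J_r equals the principal ideal (p) ⊆ A/J_r. -/
/-- The `n`-fold composite of a ring endomorphism. -/
def iterHom {A : Type*} [CommRing A] (φ : A →+* A) : ℕ → (A →+* A)
  | 0 => RingHom.id A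
  | n + 1 => φ.comp (iterHom φ n)

/-- `prIdeal φ I r = I · φ(I) ⋯ φ^(r-1)(I)` (the ideal `I_r`), with `prIdeal φ I 0 = (1)`. -/
def prIdeal {A : Type*} [CommRing A] (φ : A →+* A) (I : Ideal A) : ℕ → Ideal A
  | 0 => ⊤
  | n + 1 => prIdeal φ I n * I.map (iterHom φ n)

section Aux

variable {A : Type*} [CommRing A]

/-- A unit plus an element of the Jacobson radical is a unit. -/
lemma auxUnitAdd {u j : A} (hu : IsUnit u) (hj : j ∈ Ideal.jacobson (⊥ : Ideal A)) :
    IsUnit (u + j) := by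
  obtain ⟨v, rfl⟩ := hu
  have h := Ideal.mem_jacobson_bot.mp hj (↑v⁻¹ : A)
  have hv : (v : A) * ↑v⁻¹ = 1 := v.mul_inv
  have key : (v : A) * (j * ↑v⁻¹ + 1) = ↑v + j := by linear_combination j * hv
  exact key ▸ (v.isUnit.mul h)

lemma prIdeal_one (φ : A →+* A) (I : Ideal A) : prIdeal φ I 1 = I := by
  show prIdeal φ I 0 * I.map (iterHom φ 0) = I
  show (⊤ : Ideal A) * I.map (RingHom.id A) = I
  rw [Ideal.map_id, Ideal.top_mul]

lemma prIdeal_succ (φ : A →+* A) (I : Ideal A) (r : ℕ) :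
    prIdeal φ I (r + 1) = I * (prIdeal φ I r).map φ := by
  induction r with
  | zero =>
      rw [prIdeal_one]
      show I = I * Ideal.map φ ⊤
      rw [Ideal.map_top, Ideal.mul_top]
  | succ n ih =>
      have hstep : prIdeal φ I (n+1) = prIdeal φ I n * I.map (iterHom φ n) := rfl
      calc prIdeal φ I (n+1+1)
          = prIdeal φ I (n+1) * I.map (φ.comp (iterHom φ n)) := rfl
        _ = (I * (prIdeal φ I n).map φ) * ((I.map (iterHom φ n)).map φ) := by
              rw [ih, Ideal.map_map]
        _ = I * ((prIdeal φ I n) * I.map (iterHom φ n)).map φ := by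
              rw [Ideal.map_mul]; ring
        _ = I * (prIdeal φ I (n+1)).map φ := by rw [← hstep]

lemma prIdeal_le (φ : A →+* A) (I : Ideal A) (r : ℕ) (hr : 1 ≤ r) :
    prIdeal φ I r ≤ I := by
  induction r with
  | zero => omega
  | succ n ih =>
      rcases Nat.eq_zero_or_pos n with h | h
      · subst h; rw [prIdeal_one]
      · exact le_trans Ideal.mul_le_left (ih h)

end Aux

/-- Lemma 2.1: for a transversal prism `(A, I)` and `r ≥ 1`, the image of the ideal
`(φ^r)(I)` in `A / J_r` (with `J_r = I·I_r^(p-1)`) equals the principal ideal `(p)`. -/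
theorem statement1
    (p : ℕ) (hp : p.Prime) {A : Type*} [CommRing A]
    (δ : A → A) (φ : A →+* A) (I : Ideal A) (d : A)
    (hdgen : I = Ideal.span {d}) (hdnz : d ∈ nonZeroDivisors A)
    (hφ : ∀ x : A, φ x = x ^ p + (p : A) * δ x)
    (hδ1 : δ 1 = 0)
    (hδadd : ∀ x y : A, δ (x + y) =
      δ x + δ y - ∑ i ∈ Finset.Ioo 0 p, ((p.choose i / p : ℕ) : A) * x ^ i * y ^ (p - i))
    (hδmul : ∀ x y : A, δ (x * y) =
      x ^ p * δ y + y ^ p * δ x + (p : A) * δ x * δ y)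
    (hcomplete : IsAdicComplete (Ideal.span {(p : A)} ⊔ I) A)
    (hdist : (p : A) ∈ I ⊔ I.map φ)
    (htrans : ∀ x : A ⧸ I, (p : A ⧸ I) * x = 0 → x = 0)
    (r : ℕ) (hr : 1 ≤ r) :
    (I.map (iterHom φ r)).map
        (Ideal.Quotient.mk (I * (prIdeal φ I r) ^ (p - 1))) =
      Ideal.span {(p : A ⧸ (I * (prIdeal φ I r) ^ (p - 1)))} := by
  haveI := hcomplete
  have hjac : Ideal.span {(p : A)} ⊔ I ≤ Ideal.jacobson (⊥ : Ideal A) :=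
    IsAdicComplete.le_jacobson_bot _
  have hdI : d ∈ I := hdgen ▸ Ideal.mem_span_singleton_self d
  have hdjac : d ∈ Ideal.jacobson (⊥ : Ideal A) := hjac (le_sup_right (a := Ideal.span {(p:A)}) hdI)
  have hpjac : (p : A) ∈ Ideal.jacobson (⊥ : Ideal A) :=
    hjac (le_sup_left (b := I) (Ideal.mem_span_singleton_self _))
  have hp1 : p - 1 + 1 = p := Nat.succ_pred_eq_of_pos hp.pos
  have hIjac : I ≤ Ideal.jacobson (⊥ : Ideal A) := le_trans le_sup_right hjac
  -- φ d is in the jacobson radical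
  have hφdjac : φ d ∈ Ideal.jacobson (⊥ : Ideal A) := by
    rw [hφ d]
    exact add_mem (Ideal.pow_mem_of_mem _ hdjac p hp.pos)
      (Ideal.mul_mem_right _ _ hpjac)
  -- δ d is a unit
  have hδd : IsUnit (δ d) := by
    rw [hdgen, Ideal.map_span, Set.image_singleton] at hdist
    obtain ⟨y, hy, z, hz, hyz⟩ := Submodule.mem_sup.mp hdist
    obtain ⟨a, ha⟩ := Ideal.mem_span_singleton'.mp hy
    obtain ⟨b, hb⟩ := Ideal.mem_span_singleton'.mp hz
    have hpd : (p : A) * (1 - b * δ d) = (a + b * d ^ (p-1)) * d := by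
      have : (p : A) = a * d + b * (d ^ p + (p:A) * δ d) := by
        rw [← hφ d, ha, hb, hyz]
      have hdp : d ^ p = d ^ (p-1) * d := by rw [← pow_succ, hp1]
      linear_combination this + b * hdp
    have hq : (p : A ⧸ I) * (Ideal.Quotient.mk I (1 - b * δ d)) = 0 := by
      have : ((p : ℕ) : A ⧸ I) = Ideal.Quotient.mk I ((p : ℕ) : A) := by
        simp
      rw [this, ← map_mul, hpd, Ideal.Quotient.eq_zero_iff_mem]
      exact Ideal.mul_mem_left _ _ hdI
    have h0 : (1 : A) - b * δ d ∈ I := by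
      rw [← Ideal.Quotient.eq_zero_iff_mem]
      exact htrans _ hq
    obtain ⟨c, hc⟩ := Ideal.mem_span_singleton'.mp (hdgen ▸ h0)
    have hbd : b * δ d = 1 + (-(c * d)) := by linear_combination hc
    have : IsUnit (b * δ d) := by
      rw [hbd]
      exact auxUnitAdd isUnit_one (neg_mem (hIjac (I.mul_mem_left c hdI)))
    exact isUnit_of_mul_isUnit_right this
  -- main induction
  have key : ∀ s : ℕ, 1 ≤ s → ∃ u e : A, IsUnit u ∧
      e ∈ I * (prIdeal φ I s) ^ (p - 1) ∧ iterHom φ s d = (p : A) * u + e := by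
    intro s hs
    induction s, hs using Nat.le_induction with
    | base =>
        refine ⟨δ d, d ^ p, hδd, ?_, ?_⟩
        · rw [prIdeal_one, hdgen, Ideal.span_singleton_pow,
            Ideal.span_singleton_mul_span_singleton, ← pow_succ', hp1]
          exact Ideal.mem_span_singleton_self _
        · show φ ((RingHom.id A) d) = _
          rw [RingHom.id_apply, hφ d]; ring
    | succ n hn ih =>
        obtain ⟨u, e, hu, he, heq⟩ := ih
        have hφe : φ e ∈ (Ideal.span {(p:A)} ⊔ Ideal.span {d ^ p}) *
            ((prIdeal φ I n).map φ) ^ (p - 1) := by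
          have h1 : φ e ∈ (I * (prIdeal φ I n) ^ (p - 1)).map φ :=
            Ideal.mem_map_of_mem φ he
          rw [Ideal.map_mul, Ideal.map_pow] at h1
          have h2 : I.map φ ≤ Ideal.span {(p:A)} ⊔ Ideal.span {d ^ p} := by
            rw [hdgen, Ideal.map_span, Set.image_singleton, Ideal.span_le]
            intro x hx
            rw [Set.mem_singleton_iff] at hx
            subst hx
            rw [hφ d, SetLike.mem_coe]
            exact add_mem
              (Submodule.mem_sup_right (Ideal.mem_span_singleton_self _))
              (Submodule.mem_sup_left (Ideal.mem_span_singleton'.mpr ⟨δ d, mul_comm _ _⟩))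
          exact Ideal.mul_mono h2 le_rfl h1
        rw [Ideal.sup_mul] at hφe
        obtain ⟨z, hz, y, hy, hzy⟩ := Submodule.mem_sup.mp hφe
        obtain ⟨w, hw, hww⟩ := Ideal.mem_span_singleton_mul.mp hz
        -- w lies in the jacobson radical
        have hwjac : w ∈ Ideal.jacobson (⊥ : Ideal A) := by
          have h3 : ((prIdeal φ I n).map φ) ^ (p - 1) ≤ (prIdeal φ I n).map φ :=
            Ideal.pow_le_self (Nat.sub_ne_zero_of_lt hp.one_lt)
          have h4 : (prIdeal φ I n).map φ ≤ I.map φ :=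
            Ideal.map_mono (prIdeal_le φ I n hn)
          have h5 : I.map φ ≤ Ideal.jacobson (⊥ : Ideal A) := by
            rw [hdgen, Ideal.map_span, Set.image_singleton, Ideal.span_le]
            intro x hx
            rw [Set.mem_singleton_iff] at hx
            exact hx ▸ hφdjac
          exact h5 (h4 (h3 hw))
        -- y lies in the new error ideal
        have hyJ : y ∈ I * (prIdeal φ I (n+1)) ^ (p - 1) := by
          have hIp : Ideal.span {d ^ p} = I * I ^ (p - 1) := by
            rw [hdgen, Ideal.span_singleton_pow,
              Ideal.span_singleton_mul_span_singleton, ← pow_succ', hp1]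
          have : I * (prIdeal φ I (n+1)) ^ (p - 1) =
              Ideal.span {d ^ p} * ((prIdeal φ I n).map φ) ^ (p - 1) := by
            rw [prIdeal_succ, mul_pow, hIp]; ring
          rw [this]
          exact hy
        refine ⟨φ u + w, y, auxUnitAdd (hu.map φ) hwjac, hyJ, ?_⟩
        show φ (iterHom φ n d) = _
        rw [heq, map_add, map_mul, map_natCast]
        rw [← hzy, ← hww]
        ring
  -- conclude
  obtain ⟨u, e, hu, he, heq⟩ := key r hr
  set J := I * (prIdeal φ I r) ^ (p - 1) with hJ
  have hmapI : I.map (iterHom φ r) = Ideal.span {iterHom φ r d} := by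
    rw [hdgen, Ideal.map_span, Set.image_singleton]
  rw [hmapI, Ideal.map_span, Set.image_singleton]
  have hmk : Ideal.Quotient.mk J (iterHom φ r d) =
      ((p : A ⧸ J)) * (Ideal.Quotient.mk J u) := by
    rw [heq, map_add, map_mul, map_natCast]
    rw [Ideal.Quotient.eq_zero_iff_mem.mpr he, add_zero]
  rw [hmk]
  exact Ideal.span_singleton_mul_right_unit (hu.map (Ideal.Quotient.mk J)) _
end

section
/- Let (A, I) be a transversal prism and r ≥ 1. Then the quotient ring A/J_r is p-torsion-free, where J_r = I·(I·φ(I)···φ^{r-1}(I))^{p-1}. -/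
section Aux

variable {A : Type*} [CommRing A]

/-- `Ptf p e`: `e` is a nonzerodivisor and `A/(e)` is `p`-torsion-free. -/
def Ptf (p e : A) : Prop :=
  e ∈ nonZeroDivisors A ∧ ∀ x y : A, p * x = e * y → ∃ z, x = e * z

lemma cancel_nzd {e a b : A} (he : e ∈ nonZeroDivisors A) (h : e * a = e * b) : a = b := by
  have h2 : (a - b) * e = 0 := by linear_combination h
  exact sub_eq_zero.mp (he.2 _ h2)

lemma ptf_one (p : A) : Ptf p 1 :=
  ⟨one_mem _, fun x _ _ => ⟨x, by ring⟩⟩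

lemma ptf_mul {p a b : A} (ha : Ptf p a) (hb : Ptf p b) : Ptf p (a * b) := by
  refine ⟨mul_mem ha.1 hb.1, fun x y h => ?_⟩
  obtain ⟨z, hz⟩ := ha.2 x (b * y) (by linear_combination h)
  obtain ⟨w, hw⟩ := hb.2 z y
    (cancel_nzd ha.1 (show a * (p * z) = a * (b * y) by linear_combination h - p * hz))
  exact ⟨w, by rw [hz, hw]; ring⟩

lemma ptf_pow {p a : A} (ha : Ptf p a) (n : ℕ) : Ptf p (a ^ n) := by
  induction n with
  | zero => simpa using ptf_one p
  | succ k ih => rw [pow_succ]; exact ptf_mul ih ha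

lemma ptf_step {p : A} {M : Ideal A}
    (hM : ∀ a : A, (∀ n : ℕ, a ∈ M ^ n) → a = 0)
    (hpnzd : p ∈ nonZeroDivisors A)
    {q : ℕ} (hq : 1 ≤ q)
    {e u : A} (he : Ptf p e) (heM : e ∈ M) (hu : IsUnit u) :
    Ptf p (e ^ q + p * u) := by
  set e' := e ^ q + p * u with he'
  have heq : Ptf p (e ^ q) := ptf_pow he q
  constructor
  · -- nonzerodivisor
    rw [mem_nonZeroDivisors_iff_right]
    intro y hy
    have hy' : e' * y = 0 := by rw [mul_comm]; exact hy
    have key : ∀ n : ℕ, ∃ z, y = e ^ (q * n) * z ∧ e' * z = 0 := by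
      intro n
      induction n with
      | zero => exact ⟨y, by simp, hy'⟩
      | succ k ih =>
        obtain ⟨z, hz1, hz2⟩ := ih
        have h3 : p * (u * z) = e ^ q * (-z) := by
          rw [he'] at hz2; linear_combination hz2
        obtain ⟨w, hw⟩ := heq.2 (u * z) (-z) h3
        obtain ⟨v, hv⟩ : ∃ v, z = e ^ q * v := by
          refine ⟨↑hu.unit⁻¹ * w, ?_⟩
          calc z = ↑hu.unit⁻¹ * u * z := by rw [IsUnit.val_inv_mul, one_mul]
            _ = ↑hu.unit⁻¹ * (u * z) := by ring
            _ = ↑hu.unit⁻¹ * (e ^ q * w) := by rw [hw]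
            _ = e ^ q * (↑hu.unit⁻¹ * w) := by ring
        have hv2 : e' * v = 0 :=
          cancel_nzd heq.1 (show e ^ q * (e' * v) = e ^ q * 0 by
            rw [mul_zero]; linear_combination hz2 - e' * hv)
        exact ⟨v, by rw [hz1, hv, Nat.mul_succ, pow_add]; ring, hv2⟩
    apply hM
    intro n
    obtain ⟨z, hz, _⟩ := key n
    rw [hz]
    have h1 : e ^ (q * n) ∈ M ^ (q * n) := Ideal.pow_mem_pow heM _
    have h2 : (M : Ideal A) ^ (q * n) ≤ M ^ n :=
      Ideal.pow_le_pow_right (Nat.le_mul_of_pos_left n hq)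
    exact Ideal.mul_mem_right _ _ (h2 h1)
  · -- p-torsion-free
    intro x y h
    have h1 : p * (x - u * y) = e ^ q * y := by rw [he'] at h; linear_combination h
    obtain ⟨z, hz⟩ := heq.2 _ _ h1
    have h2 : y = p * z := by
      apply cancel_nzd heq.1
      linear_combination -h1 + p * hz
    refine ⟨z, cancel_nzd hpnzd ?_⟩
    rw [he'] at h
    linear_combination h + (e ^ q + p * u) * h2

lemma iterHom_comm {A : Type*} [CommRing A] (φ : A →+* A) (n : ℕ) (x : A) :
    iterHom φ n (φ x) = φ (iterHom φ n x) := by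
  induction n with
  | zero => rfl
  | succ k ih => simp only [iterHom, RingHom.comp_apply, ih]

lemma prIdeal_span {A : Type*} [CommRing A] (φ : A →+* A) (d : A) (n : ℕ) :
    prIdeal φ (Ideal.span {d}) n
      = Ideal.span {∏ k ∈ Finset.range n, iterHom φ k d} := by
  induction n with
  | zero => simp [prIdeal, Ideal.span_singleton_one]
  | succ k ih =>
    rw [show prIdeal φ (Ideal.span {d}) (k + 1)
        = prIdeal φ (Ideal.span {d}) k * (Ideal.span {d}).map (iterHom φ k) from rfl,
      ih, Ideal.map_span, Set.image_singleton, Ideal.span_singleton_mul_span_singleton,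
      Finset.prod_range_succ]

end Aux

/-- For a transversal prism `(A, I)` and `r ≥ 1`, the quotient ring `A / J_r` is
`p`-torsion-free, where `J_r = I·(I·φ(I)⋯φ^(r-1)(I))^(p-1)`. -/
theorem statement2
    (p : ℕ) (hp : p.Prime) {A : Type*} [CommRing A]
    (δ : A → A) (φ : A →+* A) (I : Ideal A) (d : A)
    (hdgen : I = Ideal.span {d}) (hdnz : d ∈ nonZeroDivisors A)
    (hφ : ∀ x : A, φ x = x ^ p + (p : A) * δ x)
    (hδ1 : δ 1 = 0)
    (hδadd : ∀ x y : A, δ (x + y) =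
      δ x + δ y - ∑ i ∈ Finset.Ioo 0 p, ((p.choose i / p : ℕ) : A) * x ^ i * y ^ (p - i))
    (hδmul : ∀ x y : A, δ (x * y) =
      x ^ p * δ y + y ^ p * δ x + (p : A) * δ x * δ y)
    (hcomplete : IsAdicComplete (Ideal.span {(p : A)} ⊔ I) A)
    (hdist : (p : A) ∈ I ⊔ I.map φ)
    (htrans : ∀ x : A ⧸ I, (p : A ⧸ I) * x = 0 → x = 0)
    (r : ℕ) (hr : 1 ≤ r) :
    ∀ x : A ⧸ (I * (prIdeal φ I r) ^ (p - 1)),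
      (p : A ⧸ (I * (prIdeal φ I r) ^ (p - 1))) * x = 0 → x = 0 := by
  have hp1 : 1 ≤ p := hp.pos
  set M : Ideal A := Ideal.span {(p : A)} ⊔ I with hM
  -- separatedness
  have hsep : ∀ a : A, (∀ n : ℕ, a ∈ M ^ n) → a = 0 := by
    intro a ha
    refine IsHausdorff.haus hcomplete.toIsHausdorff a (fun n => ?_)
    rw [SModEq.zero]
    have : a • (1 : A) ∈ (M ^ n) • (⊤ : Submodule A A) :=
      Submodule.smul_mem_smul (ha n) trivial
    simpa using this
  have hpM : (p : A) ∈ M := Submodule.mem_sup_left (Ideal.mem_span_singleton_self _)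
  have hdM : d ∈ M := Submodule.mem_sup_right (hdgen ▸ Ideal.mem_span_singleton_self _)
  -- A/(d) is p-torsion-free, restated
  have hdtf : ∀ x y : A, (p : A) * x = d * y → ∃ z, x = d * z := by
    intro x y h
    have hx : (Ideal.Quotient.mk I x : A ⧸ I) = 0 := by
      apply htrans
      have hmem : ((p : A) * x : A) ∈ I := hdgen ▸ Ideal.mem_span_singleton.mpr ⟨y, h⟩
      rw [← map_natCast (Ideal.Quotient.mk I), ← map_mul, Ideal.Quotient.eq_zero_iff_mem]
      exact hmem
    rw [Ideal.Quotient.eq_zero_iff_mem, hdgen, Ideal.mem_span_singleton] at hx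
    exact hx
  have hPd : Ptf (p : A) d := ⟨hdnz, hdtf⟩
  -- p is a nonzerodivisor
  have hpnzd : (p : A) ∈ nonZeroDivisors A := by
    rw [mem_nonZeroDivisors_iff_right]
    intro a ha
    have ha' : (p : A) * a = 0 := by rw [mul_comm]; exact ha
    have key : ∀ n : ℕ, ∃ z, a = d ^ n * z ∧ (p : A) * z = 0 := by
      intro n
      induction n with
      | zero => exact ⟨a, by simp, ha'⟩
      | succ k ih =>
        obtain ⟨z, hz1, hz2⟩ := ih
        obtain ⟨w, hw⟩ := hdtf z 0 (by rw [hz2, mul_zero])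
        have hw2 : (p : A) * w = 0 :=
          cancel_nzd hdnz (show d * ((p : A) * w) = d * 0 by
            rw [mul_zero]; linear_combination hz2 - (p : A) * hw)
        exact ⟨w, by rw [hz1, hw, pow_succ]; ring, hw2⟩
    apply hsep
    intro n
    obtain ⟨z, hz, _⟩ := key n
    rw [hz]
    exact Ideal.mul_mem_right _ _ (Ideal.pow_mem_pow hdM n)
  -- δ d is a unit
  have hδdu : IsUnit (δ d) := by
    rw [hdgen, Ideal.map_span, Set.image_singleton] at hdist
    obtain ⟨y, hy, z, hz, hyz⟩ := Submodule.mem_sup.mp hdist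
    obtain ⟨a, ha⟩ := Ideal.mem_span_singleton.mp hy
    obtain ⟨b, hb⟩ := Ideal.mem_span_singleton.mp hz
    have hkey : (p : A) * (1 - δ d * b) = d * (a + d ^ (p - 1) * b) := by
      have hdp : d ^ p = d * d ^ (p - 1) := by
        conv_lhs => rw [show p = (p - 1) + 1 from (Nat.succ_pred_eq_of_pos hp.pos).symm]
        rw [pow_succ]; ring
      have h0 : (p : A) = d * a + (d ^ p + (p : A) * δ d) * b := by
        rw [← hφ d, ← ha, ← hb]; exact hyz.symm
      rw [hdp] at h0
      linear_combination h0
    obtain ⟨c, hc⟩ := hdtf _ _ hkey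
    have hunit : IsUnit (1 - d * c) := by
      have hmem : d * c ∈ (⊥ : Ideal A).jacobson :=
        IsAdicComplete.le_jacobson_bot M (Ideal.mul_mem_right _ _ hdM)
      have h1 := Ideal.mem_jacobson_bot.mp hmem (-1)
      have h2 : d * c * (-1) + 1 = 1 - d * c := by ring
      rwa [h2] at h1
    have hδb : δ d * b = 1 - d * c := by linear_combination -hc
    exact isUnit_of_mul_isUnit_left (hδb ▸ hunit)
  -- the iterates φ^k(d) satisfy Ptf and lie in M
  have hiter : ∀ k : ℕ, Ptf (p : A) (iterHom φ k d) ∧ iterHom φ k d ∈ M := by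
    intro k
    induction k with
    | zero => exact ⟨hPd, hdM⟩
    | succ k ih =>
      have heq : iterHom φ (k + 1) d
          = (iterHom φ k d) ^ p + (p : A) * (iterHom φ k (δ d)) := by
        have h1 : iterHom φ (k + 1) d = iterHom φ k (φ d) := by
          rw [show iterHom φ (k + 1) d = φ (iterHom φ k d) from rfl, iterHom_comm]
        rw [h1, hφ d, map_add, map_mul, map_pow, map_natCast]
      have hu : IsUnit (iterHom φ k (δ d)) := hδdu.map (iterHom φ k)
      have hstep := ptf_step hsep hpnzd hp1 ih.1 ih.2 hu
      refine ⟨heq ▸ hstep, ?_⟩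
      rw [heq]
      exact add_mem (Ideal.pow_le_self (by omega) (Ideal.pow_mem_pow ih.2 p))
        (Ideal.mul_mem_right _ _ hpM)
  -- product of the iterates
  have hc : ∀ n : ℕ, Ptf (p : A) (∏ k ∈ Finset.range n, iterHom φ k d) := by
    intro n
    induction n with
    | zero => simpa using ptf_one (p : A)
    | succ k ih => rw [Finset.prod_range_succ]; exact ptf_mul ih (hiter k).1
  -- the ideal J_r is principal
  have hJg : I * (prIdeal φ I r) ^ (p - 1)
      = Ideal.span {d * (∏ k ∈ Finset.range r, iterHom φ k d) ^ (p - 1)} := by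
    rw [hdgen, prIdeal_span, Ideal.span_singleton_pow,
      Ideal.span_singleton_mul_span_singleton]
  have hPg : Ptf (p : A) (d * (∏ k ∈ Finset.range r, iterHom φ k d) ^ (p - 1)) :=
    ptf_mul hPd (ptf_pow (hc r) (p - 1))
  -- conclude
  intro x hx
  obtain ⟨a, rfl⟩ := Ideal.Quotient.mk_surjective x
  rw [← map_natCast (Ideal.Quotient.mk (I * (prIdeal φ I r) ^ (p - 1))), ← map_mul,
    Ideal.Quotient.eq_zero_iff_mem, hJg, Ideal.mem_span_singleton] at hx
  obtain ⟨y, hy⟩ := hx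
  obtain ⟨z, hz⟩ := hPg.2 a y hy
  rw [Ideal.Quotient.eq_zero_iff_mem, hJg, Ideal.mem_span_singleton]
  exact ⟨z, hz⟩
end

section
/- Let (A, I) be a transversal prism and r ≥ 1, with I_r = I·φ(I)···φ^{r-1}(I) and J_r = I·I_r^{p-1}. Then the square of commutative rings A/(J_r·(φ^r)(I)) → A/(φ^r)(I), A/(J_r·(φ^r)(I)) → A/J_r, mapping to A/(J_r + (φ^r)(I)), is Cartesian: A/(J_r·(φ^r)(I)) ≅ A/J_r ×_{A/(J_r+(φ^r)(I))} A/(φ^r)(I). -/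
lemma iterHom_phi {A : Type*} [CommRing A] (φ : A →+* A) (n : ℕ) (x : A) :
    iterHom φ n (φ x) = iterHom φ (n + 1) x := by
  induction n with
  | zero => rfl
  | succ n ih => show φ (iterHom φ n (φ x)) = φ (iterHom φ (n+1) x); rw [ih]

lemma aux_dvd_of_unit_mul {A : Type*} [CommRing A] {v a g : A} (hv : IsUnit v)
    (h : g ∣ v * a) : g ∣ a := by
  obtain ⟨t, ht⟩ := h
  refine ⟨(↑hv.unit⁻¹ : A) * t, ?_⟩
  have hinv : (↑hv.unit⁻¹ : A) * v = 1 := hv.val_inv_mul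
  linear_combination (↑hv.unit⁻¹ : A) * ht - a * hinv

lemma aux_pow_tf {A : Type*} [CommRing A] (p : ℕ) (f : A)
    (hf : f ∈ nonZeroDivisors A)
    (hT : ∀ a b : A, (p : A) * a = f * b → f ∣ a) :
    ∀ (k : ℕ) (a b : A), (p : A) * a = f ^ k * b → f ^ k ∣ a := by
  intro k
  induction k with
  | zero => intro a b _; simp
  | succ k ih =>
    intro a b h
    obtain ⟨a', rfl⟩ := hT a (f ^ k * b) (by rw [h]; ring)
    have h2 : ((p : A) * a' - f ^ k * b) * f = 0 := by linear_combination h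
    have h3 : (p : A) * a' = f ^ k * b := by
      have h4 := mem_nonZeroDivisors_iff_right.mp hf _ h2; linear_combination h4
    obtain ⟨c, rfl⟩ := ih a' b h3
    exact ⟨c, by ring⟩

lemma aux_single {A : Type*} [CommRing A] (p : ℕ) (g F : A)
    (hT : ∀ a b : A, (p : A) * a = g * b → g ∣ a)
    (hU : ∃ v c : A, IsUnit v ∧ F = (p : A) * v + g * c) :
    ∀ a b : A, a * F = g * b → g ∣ a := by
  obtain ⟨v, c, hv, hF⟩ := hU
  intro a b h
  have h1 : (p : A) * (v * a) = g * (b - c * a) := by rw [hF] at h; linear_combination h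
  exact aux_dvd_of_unit_mul hv (hT _ _ h1)

lemma aux_mul {A : Type*} [CommRing A] {F m₁ m₂ : A}
    (h₁ : m₁ ∈ nonZeroDivisors A)
    (Q₁ : ∀ a b : A, a * F = m₁ * b → m₁ ∣ a)
    (Q₂ : ∀ a b : A, a * F = m₂ * b → m₂ ∣ a) :
    ∀ a b : A, a * F = m₁ * m₂ * b → m₁ * m₂ ∣ a := by
  intro a b h
  obtain ⟨c, rfl⟩ := Q₁ a (m₂ * b) (by rw [h]; ring)
  have h2 : (c * F - m₂ * b) * m₁ = 0 := by linear_combination h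
  have h3 : c * F = m₂ * b := by
    have h4 := mem_nonZeroDivisors_iff_right.mp h₁ _ h2; linear_combination h4
  obtain ⟨t, rfl⟩ := Q₂ c b h3
  exact ⟨t, by ring⟩

/-- For a transversal prism `(A,I)` and `r ≥ 1`, with `I_r = I·φ(I)⋯φ^(r-1)(I)` and
`J_r = I·I_r^(p-1)`, the square of rings with vertices `A/(J_r·(φ^r)(I))`, `A/J_r`,
`A/(φ^r)(I)`, `A/(J_r + (φ^r)(I))` is Cartesian. -/
theorem statement4
    (p : ℕ) (hp : p.Prime) {A : Type*} [CommRing A]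
    (δ : A → A) (φ : A →+* A) (I : Ideal A) (d : A)
    (hdgen : I = Ideal.span {d}) (hdnz : d ∈ nonZeroDivisors A)
    (hφ : ∀ x : A, φ x = x ^ p + (p : A) * δ x)
    (hδ1 : δ 1 = 0)
    (hδadd : ∀ x y : A, δ (x + y) =
      δ x + δ y - ∑ i ∈ Finset.Ioo 0 p, ((p.choose i / p : ℕ) : A) * x ^ i * y ^ (p - i))
    (hδmul : ∀ x y : A, δ (x * y) =
      x ^ p * δ y + y ^ p * δ x + (p : A) * δ x * δ y)
    (hcomplete : IsAdicComplete (Ideal.span {(p : A)} ⊔ I) A)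
    (hdist : (p : A) ∈ I ⊔ I.map φ)
    (htrans : ∀ x : A ⧸ I, (p : A ⧸ I) * x = 0 → x = 0)
    (r : ℕ) (hr : 1 ≤ r) :
    Function.Injective (fun x : A ⧸ ((I * (prIdeal φ I r) ^ (p - 1)) * I.map (iterHom φ r)) =>
      ((Ideal.Quotient.factor (Ideal.mul_le_left) x,
        Ideal.Quotient.factor (Ideal.mul_le_right) x) :
          (A ⧸ (I * (prIdeal φ I r) ^ (p - 1))) × (A ⧸ I.map (iterHom φ r)))) ∧
    ∀ y : (A ⧸ (I * (prIdeal φ I r) ^ (p - 1))) × (A ⧸ I.map (iterHom φ r)),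
      (Ideal.Quotient.factor
          (le_sup_left : I * (prIdeal φ I r) ^ (p - 1) ≤
            I * (prIdeal φ I r) ^ (p - 1) ⊔ I.map (iterHom φ r)) y.1 =
        Ideal.Quotient.factor
          (le_sup_right : I.map (iterHom φ r) ≤
            I * (prIdeal φ I r) ^ (p - 1) ⊔ I.map (iterHom φ r)) y.2) ↔
      ∃ x : A ⧸ ((I * (prIdeal φ I r) ^ (p - 1)) * I.map (iterHom φ r)),
        Ideal.Quotient.factor (Ideal.mul_le_left) x = y.1 ∧
        Ideal.Quotient.factor (Ideal.mul_le_right) x = y.2 := by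
  classical
  have hp2 := hp.two_le
  haveI := hcomplete
  set M : Ideal A := Ideal.span {(p : A)} ⊔ I with hM
  set f : ℕ → A := fun i => iterHom φ i d with hfdef
  have hf0 : f 0 = d := rfl
  have hphi : ∀ i, f (i + 1) = f i ^ p + (p : A) * δ (f i) := by
    intro i
    show φ (f i) = f i ^ p + (p : A) * δ (f i)
    exact hφ (f i)
  have hcancel : ∀ {g : A}, g ∈ nonZeroDivisors A → ∀ {x y : A}, g * x = g * y → x = y := by
    intro g hg x y h
    have h2 : (x - y) * g = 0 := by linear_combination h
    have h3 := mem_nonZeroDivisors_iff_right.mp hg _ h2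
    linear_combination h3
  -- membership of f i in M
  have hdI : d ∈ I := by rw [hdgen]; exact Ideal.mem_span_singleton_self d
  have hpM : (p : A) ∈ M := Ideal.mem_sup_left (Ideal.mem_span_singleton_self _)
  have hfM : ∀ i, f i ∈ M := by
    intro i
    induction i with
    | zero => exact Ideal.mem_sup_right hdI
    | succ i ih =>
      rw [hphi]
      exact add_mem (Ideal.pow_mem_of_mem _ ih p hp.pos) (Ideal.mul_mem_right _ _ hpM)
  -- separatedness
  have hsep : ∀ (x : A) (i : ℕ), (∀ n : ℕ, f i ^ n ∣ x) → x = 0 := by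
    intro x i hx
    refine hcomplete.toIsHausdorff.haus x fun n => ?_
    rw [SModEq.zero]
    obtain ⟨c, hc⟩ := hx n
    have h1 : x ∈ M ^ n := hc ▸ Ideal.mul_mem_right c _ (Ideal.pow_mem_pow (hfM i) n)
    rw [Ideal.smul_eq_mul, Ideal.mul_top]
    exact h1
  -- jacobson facts
  have hjac : M ≤ Ideal.jacobson ⊥ := IsAdicComplete.le_jacobson_bot M
  have hunit1 : ∀ u x : A, IsUnit u → IsUnit (u + (p : A) * x) := by
    intro u x hu
    have h1 : IsUnit ((p : A) * ((↑hu.unit⁻¹ : A) * x) + 1) :=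
      Ideal.mem_jacobson_bot.mp (hjac hpM) _
    have h2 : u + (p : A) * x = u * ((p : A) * ((↑hu.unit⁻¹ : A) * x) + 1) := by
      have hinv : u * (↑hu.unit⁻¹ : A) = 1 := hu.mul_val_inv
      linear_combination (-((p : A) * x)) * hinv
    rw [h2]
    exact hu.mul h1
  have hunit2 : ∀ g x : A, g ∈ M → IsUnit (1 - g * x) := by
    intro g x hg
    have h1 : IsUnit (g * (-x) + 1) := Ideal.mem_jacobson_bot.mp (hjac hg) _
    have h2 : (1 : A) - g * x = g * (-x) + 1 := by ring
    rw [h2]; exact h1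
  -- T 0
  have hT0 : ∀ a b : A, (p : A) * a = d * b → d ∣ a := by
    intro a b h
    have h0 : ((p : A) * a) ∈ I := by
      rw [h, hdgen]; exact Ideal.mul_mem_right b _ (Ideal.mem_span_singleton_self d)
    have h1 : (p : A ⧸ I) * (Ideal.Quotient.mk I a) = 0 := by
      have h2 : Ideal.Quotient.mk I ((p : A) * a) = 0 := Ideal.Quotient.eq_zero_iff_mem.mpr h0
      rw [map_mul, map_natCast] at h2
      exact h2
    have h3 := htrans _ h1
    rw [Ideal.Quotient.eq_zero_iff_mem, hdgen, Ideal.mem_span_singleton] at h3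
    exact h3
  -- A is p-torsion-free
  have hdn : ∀ (n : ℕ) (a : A), (p : A) * a = 0 → d ^ n ∣ a := by
    intro n
    induction n with
    | zero => intro a _; simp
    | succ n ih =>
      intro a ha
      obtain ⟨a', rfl⟩ := hT0 a 0 (by rw [ha]; ring)
      have ha' : (p : A) * a' = 0 := by
        have h2 : ((p : A) * a') * d = 0 := by linear_combination ha
        exact mem_nonZeroDivisors_iff_right.mp hdnz _ h2
      obtain ⟨c, rfl⟩ := ih a' ha'
      exact ⟨c, by ring⟩
  have hptf : ∀ a : A, (p : A) * a = 0 → a = 0 := by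
    intro a ha
    exact hsep a 0 fun n => by rw [hf0]; exact hdn n a ha
  -- unit of δ (f i) given torsion-freeness at i
  have hunitδ : ∀ i, (∀ a b : A, (p : A) * a = f i * b → f i ∣ a) → IsUnit (δ (f i)) := by
    intro i hT
    obtain ⟨x, hx, y, hy, hxy⟩ := Submodule.mem_sup.mp hdist
    rw [hdgen, Ideal.mem_span_singleton] at hx
    obtain ⟨α, rfl⟩ := hx
    rw [hdgen, Ideal.map_span, Set.image_singleton, Ideal.mem_span_singleton] at hy
    obtain ⟨β, rfl⟩ := hy
    have happ := congrArg (iterHom φ i) hxy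
    rw [map_add, map_mul, map_mul, map_natCast] at happ
    have hd1 : iterHom φ i d = f i := rfl
    have hd2 : iterHom φ i (φ d) = f (i + 1) := iterHom_phi φ i d
    rw [hd1, hd2] at happ
    -- happ : f i * (iterHom φ i α) + f (i+1) * (iterHom φ i β) = p
    set α' := iterHom φ i α
    set β' := iterHom φ i β
    have hps : f i ^ p = f i * f i ^ (p - 1) := by
      conv_lhs => rw [show p = (p - 1) + 1 from (Nat.succ_pred_eq_of_pos hp.pos).symm]
      rw [pow_succ']
    have hkey : (p : A) * (1 - β' * δ (f i)) = f i * (α' + f i ^ (p - 1) * β') := by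
      rw [hphi i] at happ
      linear_combination (-1 : A) * happ + β' * hps
    obtain ⟨γ, hγ⟩ := hT _ _ hkey
    have hβu : IsUnit (β' * δ (f i)) := by
      have h2 : β' * δ (f i) = 1 - f i * γ := by linear_combination -hγ
      rw [h2]
      exact hunit2 _ _ (hfM i)
    exact isUnit_of_mul_isUnit_right hβu
  -- main induction: nonzerodivisor and p-torsion-freeness for all f i
  have main : ∀ i, f i ∈ nonZeroDivisors A ∧ (∀ a b : A, (p : A) * a = f i * b → f i ∣ a) := by
    intro i
    induction i with
    | zero => exact ⟨hdnz, hT0⟩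
    | succ i ih =>
      obtain ⟨hN, hT⟩ := ih
      have huu : IsUnit (δ (f i)) := hunitδ i hT
      have hTpow := aux_pow_tf p (f i) hN hT
      have hNs : f (i + 1) ∈ nonZeroDivisors A := by
        have key : ∀ (n : ℕ) (z : A), z * f (i + 1) = 0 → f i ^ n ∣ z := by
          intro n
          induction n with
          | zero => intro z _; simp
          | succ n ihn =>
            intro z hz
            have h1 : (p : A) * (δ (f i) * z) = f i ^ p * (-z) := by
              rw [hphi i] at hz; linear_combination hz
            have h3 : f i ^ p ∣ z := aux_dvd_of_unit_mul huu (hTpow p _ _ h1)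
            obtain ⟨z', hz'⟩ := h3
            have hz'' : z' * f (i + 1) = 0 := by
              refine hcancel (pow_mem hN p) ?_
              rw [hz'] at hz
              linear_combination hz
            obtain ⟨c, hc⟩ := ihn z' hz''
            refine ⟨f i ^ (p - 1) * c, ?_⟩
            rw [hz', hc]
            have hpe : p + n = (n + 1) + (p - 1) := by omega
            calc f i ^ p * (f i ^ n * c) = f i ^ (p + n) * c := by rw [pow_add]; ring
              _ = f i ^ ((n + 1) + (p - 1)) * c := by rw [hpe]
              _ = f i ^ (n + 1) * (f i ^ (p - 1) * c) := by rw [pow_add]; ring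
        rw [mem_nonZeroDivisors_iff_right]
        intro z hz
        exact hsep z i fun n => key n z hz
      have hTs : ∀ a b : A, (p : A) * a = f (i + 1) * b → f (i + 1) ∣ a := by
        intro a b h
        have h1 : (p : A) * (a - δ (f i) * b) = f i ^ p * b := by
          rw [hphi i] at h; linear_combination h
        obtain ⟨c, hc⟩ := hTpow p _ _ h1
        have hb : b = (p : A) * c := by
          refine hcancel (pow_mem hN p) ?_
          linear_combination (-1 : A) * h1 + (p : A) * hc
        have h2 : (p : A) * (a - f (i + 1) * c) = 0 := by
          rw [hb] at h; linear_combination h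
        exact ⟨c, by linear_combination hptf _ h2⟩
      exact ⟨hNs, hTs⟩
  -- hU : f i ≡ p * unit mod f j for j < i
  have hU : ∀ j i : ℕ, j < i → ∃ v c : A, IsUnit v ∧ f i = (p : A) * v + f j * c := by
    intro j i hji
    induction i with
    | zero => omega
    | succ i ihi =>
      have hps : ∀ k, f k ^ p = f k * f k ^ (p - 1) := by
        intro k
        conv_lhs => rw [show p = (p - 1) + 1 from (Nat.succ_pred_eq_of_pos hp.pos).symm]
        rw [pow_succ']
      rcases Nat.lt_succ_iff_lt_or_eq.mp hji with h | h
      · obtain ⟨v, c, hv, hvc⟩ := ihi h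
        have hd : f j * c ∣ f i ^ p - ((p : A) * v) ^ p := by
          have h5 := sub_dvd_pow_sub_pow (f i) ((p : A) * v) p
          rwa [show f i - (p : A) * v = f j * c from by linear_combination hvc] at h5
        obtain ⟨c₂, hc₂⟩ := hd
        refine ⟨δ (f i) + (p : A) * ((p : A) ^ (p - 2) * v ^ p), c * c₂,
          hunit1 _ _ (hunitδ i (main i).2), ?_⟩
        have hpp : (p : A) * ((p : A) * (p : A) ^ (p - 2)) = (p : A) ^ p := by
          have h6 : (p : A) ^ (p - 2) * (p : A) ^ 2 = (p : A) ^ p := pow_sub_mul_pow (p : A) hp2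
          linear_combination h6
        rw [hphi i]
        have hmp : ((p : A) * v) ^ p = (p : A) ^ p * v ^ p := by rw [mul_pow]
        linear_combination hc₂ + hmp - v ^ p * hpp
      · subst h
        refine ⟨δ (f j), f j ^ (p - 1), hunitδ j (main j).2, ?_⟩
        rw [hphi j, hps j]
        ring
  -- good elements
  have hQgen : ∀ j, j < r → ∀ a b : A, a * f r = f j * b → f j ∣ a := by
    intro j hj
    exact aux_single p (f j) (f r) (main j).2 (by
      obtain ⟨v, c, hv, h⟩ := hU j r hj
      exact ⟨v, c, hv, h⟩)
  have Pmul : ∀ m₁ m₂ : A,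
      (m₁ ∈ nonZeroDivisors A ∧ ∀ a b : A, a * f r = m₁ * b → m₁ ∣ a) →
      (m₂ ∈ nonZeroDivisors A ∧ ∀ a b : A, a * f r = m₂ * b → m₂ ∣ a) →
      ((m₁ * m₂) ∈ nonZeroDivisors A ∧ ∀ a b : A, a * f r = m₁ * m₂ * b → m₁ * m₂ ∣ a) :=
    fun m₁ m₂ h1 h2 => ⟨mul_mem h1.1 h2.1, aux_mul h1.1 h1.2 h2.2⟩
  have Pone : ((1 : A) ∈ nonZeroDivisors A ∧ ∀ a b : A, a * f r = 1 * b → (1 : A) ∣ a) :=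
    ⟨one_mem _, fun a _ _ => one_dvd a⟩
  have Ppow : ∀ m : A,
      (m ∈ nonZeroDivisors A ∧ ∀ a b : A, a * f r = m * b → m ∣ a) → ∀ k : ℕ,
      (m ^ k ∈ nonZeroDivisors A ∧ ∀ a b : A, a * f r = m ^ k * b → m ^ k ∣ a) := by
    intro m hm k
    induction k with
    | zero => simpa using Pone
    | succ k ih =>
      have := Pmul _ _ ih hm
      rwa [← pow_succ] at this
  have Pe : ((∏ n ∈ Finset.range r, f n ^ (p - 1)) ∈ nonZeroDivisors A ∧
      ∀ a b : A, a * f r = (∏ n ∈ Finset.range r, f n ^ (p - 1)) * b →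
        (∏ n ∈ Finset.range r, f n ^ (p - 1)) ∣ a) := by
    refine Finset.prod_induction _
      (fun m => m ∈ nonZeroDivisors A ∧ ∀ a b : A, a * f r = m * b → m ∣ a)
      Pmul Pone ?_
    intro j hj
    exact Ppow _ ⟨(main j).1, hQgen j (Finset.mem_range.mp hj)⟩ (p - 1)
  set e : A := ∏ n ∈ Finset.range r, f n with he
  set w : A := d * e ^ (p - 1) with hw
  have hep : e ^ (p - 1) = ∏ n ∈ Finset.range r, f n ^ (p - 1) := by
    rw [he, Finset.prod_pow]
  have Pw : (w ∈ nonZeroDivisors A ∧ ∀ a b : A, a * f r = w * b → w ∣ a) := by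
    rw [hw, hep]
    exact Pmul _ _ ⟨hdnz, hQgen 0 hr⟩ Pe
  -- ideal identifications
  have hKspan : I.map (iterHom φ r) = Ideal.span {f r} := by
    rw [hdgen, Ideal.map_span, Set.image_singleton]
  have hPr : ∀ n, prIdeal φ I n = Ideal.span {∏ k ∈ Finset.range n, f k} := by
    intro n
    induction n with
    | zero => simp [prIdeal, Ideal.span_singleton_one]
    | succ n ih =>
      show prIdeal φ I n * I.map (iterHom φ n) = _
      rw [ih, hdgen, Ideal.map_span, Set.image_singleton,
        Ideal.span_singleton_mul_span_singleton, Finset.prod_range_succ]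
  have hJspan : I * (prIdeal φ I r) ^ (p - 1) = Ideal.span {w} := by
    rw [hPr r, hdgen, Ideal.span_singleton_pow, Ideal.span_singleton_mul_span_singleton, hw, he]
  have hJKspan : (I * (prIdeal φ I r) ^ (p - 1)) * I.map (iterHom φ r) =
      Ideal.span {w * f r} := by
    rw [hJspan, hKspan, Ideal.span_singleton_mul_span_singleton]
  -- key intersection fact
  have hinter : ∀ z : A, z ∈ I * (prIdeal φ I r) ^ (p - 1) → z ∈ I.map (iterHom φ r) →
      z ∈ (I * (prIdeal φ I r) ^ (p - 1)) * I.map (iterHom φ r) := by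
    intro z h1 h2
    rw [hJspan, Ideal.mem_span_singleton] at h1
    rw [hKspan, Ideal.mem_span_singleton] at h2
    obtain ⟨b, hb⟩ := h1
    obtain ⟨c, hc⟩ := h2
    have h3 : c * f r = w * b := by linear_combination hb - hc
    obtain ⟨t, ht⟩ := Pw.2 c b h3
    rw [hJKspan, Ideal.mem_span_singleton]
    exact ⟨t, by rw [hc, ht]; ring⟩
  -- assembly
  constructor
  · intro x y hxy
    obtain ⟨a, rfl⟩ := Ideal.Quotient.mk_surjective x
    obtain ⟨b, rfl⟩ := Ideal.Quotient.mk_surjective y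
    simp only [Ideal.Quotient.factor_mk, Prod.mk.injEq] at hxy
    obtain ⟨h1, h2⟩ := hxy
    rw [Ideal.Quotient.mk_eq_mk_iff_sub_mem] at h1 h2 ⊢
    exact hinter _ h1 h2
  · intro y
    constructor
    · intro h
      obtain ⟨a, ha⟩ := Ideal.Quotient.mk_surjective y.1
      obtain ⟨b, hb⟩ := Ideal.Quotient.mk_surjective y.2
      rw [← ha, ← hb, Ideal.Quotient.factor_mk, Ideal.Quotient.factor_mk,
        Ideal.Quotient.mk_eq_mk_iff_sub_mem] at h
      obtain ⟨j, hj, k, hk, hjk⟩ := Submodule.mem_sup.mp h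
      refine ⟨Ideal.Quotient.mk _ (a - j), ?_, ?_⟩
      · rw [Ideal.Quotient.factor_mk, ← ha, Ideal.Quotient.mk_eq_mk_iff_sub_mem]
        have : a - j - a = -j := by ring
        rw [this]
        exact neg_mem hj
      · rw [Ideal.Quotient.factor_mk, ← hb, Ideal.Quotient.mk_eq_mk_iff_sub_mem]
        have : a - j - b = k := by linear_combination -hjk
        rw [this]
        exact hk
    · rintro ⟨x, h1, h2⟩
      obtain ⟨c, rfl⟩ := Ideal.Quotient.mk_surjective x
      rw [Ideal.Quotient.factor_mk] at h1 h2
      rw [← h1, ← h2, Ideal.Quotient.factor_mk, Ideal.Quotient.factor_mk]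
end

section
/- Let (A, I) be a transversal prism and r ≥ 1. The map A/I_r → A/I_r ×_{A/(I_r + (φ^r)(I))} A/(φ^r)(I) given by x ↦ (x^p, φ(x)) is well-defined (i.e., x^p and φ(x) have equal images in A/(I_r + (φ^r)(I))) and multiplicative, hence induces a multiplicative map N_r : A/I_r → A/I_{r+1} via the identification A/I_{r+1} ≅ A/I_r ×_{A/(I_r+(φ^r)(I))} A/(φ^r)(I). In particular N_r restricts to a group homomorphism on unit groups (A/I_r)^× → (A/I_{r+1})^×. -/
lemma iterHom_swap {A : Type*} [CommRing A] (φ : A →+* A) (n : ℕ) (x : A) :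
    iterHom φ (n + 1) x = iterHom φ n (φ x) := by
  induction n with
  | zero => rfl
  | succ n ih =>
    show φ (iterHom φ (n + 1) x) = _
    rw [ih]; rfl

lemma binom2 {A : Type*} [CommRing A] (a t : A) (n : ℕ) :
    ∃ c, (a + t) ^ (n + 1) = a ^ (n + 1) + ((n : A) + 1) * a ^ n * t + t ^ 2 * c := by
  induction n with
  | zero => exact ⟨0, by ring⟩
  | succ n ih =>
    obtain ⟨c, hc⟩ := ih
    refine ⟨a * c + ((n : A) + 1) * a ^ n + t * c, ?_⟩
    rw [pow_succ, hc]
    push_cast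
    ring

/-- For a transversal prism `(A,I)` and `r ≥ 1`, the assignment `x ↦ (x^p, φ(x))` is a
well-defined multiplicative map `A/I_r → A/I_r ×_{A/(I_r + (φ^r)(I))} A/(φ^r)(I)`, and hence
induces a multiplicative map `N_r : A/I_r → A/I_{r+1}` (via `I_{r+1} = I_r·(φ^r)(I)` and the
Cartesian square); in particular it gives a group homomorphism on unit groups. -/
theorem statement5
    (p : ℕ) (hp : p.Prime) {A : Type*} [CommRing A]
    (δ : A → A) (φ : A →+* A) (I : Ideal A) (d : A)
    (hdgen : I = Ideal.span {d}) (hdnz : d ∈ nonZeroDivisors A)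
    (hφ : ∀ x : A, φ x = x ^ p + (p : A) * δ x)
    (hδ1 : δ 1 = 0)
    (hδadd : ∀ x y : A, δ (x + y) =
      δ x + δ y - ∑ i ∈ Finset.Ioo 0 p, ((p.choose i / p : ℕ) : A) * x ^ i * y ^ (p - i))
    (hδmul : ∀ x y : A, δ (x * y) =
      x ^ p * δ y + y ^ p * δ x + (p : A) * δ x * δ y)
    (hcomplete : IsAdicComplete (Ideal.span {(p : A)} ⊔ I) A)
    (hdist : (p : A) ∈ I ⊔ I.map φ)
    (htrans : ∀ x : A ⧸ I, (p : A ⧸ I) * x = 0 → x = 0)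
    (r : ℕ) (hr : 1 ≤ r) :
    (∀ x y : A, x - y ∈ prIdeal φ I r →
      x ^ p - y ^ p ∈ prIdeal φ I r ∧ φ x - φ y ∈ I.map (iterHom φ r)) ∧
    (∀ x : A, x ^ p - φ x ∈ prIdeal φ I r ⊔ I.map (iterHom φ r)) ∧
    ∃ N : (A ⧸ prIdeal φ I r) →* (A ⧸ prIdeal φ I (r + 1)),
      ∀ a : A, ∃ b : A,
        Ideal.Quotient.mk (prIdeal φ I (r + 1)) b = N (Ideal.Quotient.mk (prIdeal φ I r) a) ∧
        b - a ^ p ∈ prIdeal φ I r ∧ b - φ a ∈ I.map (iterHom φ r) := by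
  classical
  set J : Ideal A := Ideal.span {(p : A)} ⊔ I with hJdef
  have hpJ : (p : A) ∈ J := Ideal.mem_sup_left (Ideal.subset_span rfl)
  have hdI : d ∈ I := hdgen ▸ Ideal.subset_span rfl
  have hdJ : d ∈ J := Ideal.mem_sup_right hdI
  haveI : IsAdicComplete J A := hcomplete
  have hJac : J ≤ (⊥ : Ideal A).jacobson := IsAdicComplete.le_jacobson_bot J
  have hunitJ : ∀ u j : A, IsUnit u → j ∈ J → IsUnit (u + j) := by
    intro u j hu hj
    obtain ⟨w, hw⟩ := hu.exists_right_inv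
    have h1 : (u + j) * w - 1 ∈ (⊥ : Ideal A).jacobson := by
      have : (u + j) * w - 1 = j * w := by rw [add_mul, hw]; ring
      rw [this]
      exact hJac (Ideal.mul_mem_right _ _ hj)
    exact isUnit_of_mul_isUnit_left (Ideal.isUnit_of_sub_one_mem_jacobson_bot _ h1)
  have hsep : ∀ t x : A, t ∈ J → (∀ n : ℕ, ∃ y, x = t ^ n * y) → x = 0 := by
    intro t x ht hx
    refine IsHausdorff.haus (IsAdicComplete.toIsHausdorff (I := J)) x fun n => SModEq.zero.2 ?_
    obtain ⟨y, hy⟩ := hx n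
    rw [hy, ← smul_eq_mul]
    exact Submodule.smul_mem_smul (Ideal.pow_mem_pow ht n) Submodule.mem_top
  have hdreg : ∀ x : A, d * x = 0 → x = 0 := fun x hx => (mem_nonZeroDivisors_iff.mp hdnz).2 x (by rwa [mul_comm] at hx)
  have htr : ∀ x : A, (p : A) * x ∈ I → x ∈ I := by
    intro x hx
    have h1 : (p : A ⧸ I) * Ideal.Quotient.mk I x = 0 := by
      rw [← map_natCast (Ideal.Quotient.mk I), ← map_mul, Ideal.Quotient.eq_zero_iff_mem]
      exact hx
    have := htrans _ h1
    rwa [Ideal.Quotient.eq_zero_iff_mem] at this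
  have htrd : ∀ x : A, d ∣ (p : A) * x → d ∣ x := by
    intro x hx
    have : x ∈ I := htr x (by rw [hdgen, Ideal.mem_span_singleton]; exact hx)
    rwa [hdgen, Ideal.mem_span_singleton] at this
  have hpreg : ∀ x : A, (p : A) * x = 0 → x = 0 := by
    intro x hx
    have key : ∀ n : ℕ, ∃ y, x = d ^ n * y ∧ (p : A) * y = 0 := by
      intro n
      induction n with
      | zero => exact ⟨x, by simp, hx⟩
      | succ n ih =>
        obtain ⟨y, hy, hpy⟩ := ih
        have hyI : d ∣ y := htrd y ⟨0, by rw [hpy, mul_zero]⟩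
        obtain ⟨c, hc⟩ := hyI
        have hpc : (p : A) * c = 0 := by
          apply hdreg
          rw [hc] at hpy
          linear_combination hpy
        exact ⟨c, by rw [hy, hc, pow_succ]; ring, hpc⟩
    exact hsep d x hdJ fun n => ⟨(key n).choose, (key n).choose_spec.1⟩
  have hpcan : ∀ x y : A, (p : A) * x = (p : A) * y → x = y := by
    intro x y h
    have := hpreg (x - y) (by linear_combination h)
    exact sub_eq_zero.mp this
  -- iterates of d
  set D : ℕ → A := fun k => iterHom φ k d with hDdef
  set v : ℕ → A := fun k => iterHom φ k (δ d) with hvdef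
  set e : ℕ → A := fun n => ∏ k ∈ Finset.range n, D k with hedef
  have hD0 : D 0 = d := rfl
  have hDsucc : ∀ k, D (k + 1) = D k ^ p + (p : A) * v k := by
    intro k
    show iterHom φ (k + 1) d = _
    rw [iterHom_swap, hφ d, map_add, map_pow, map_mul, map_natCast]
  have hDphi : ∀ k, φ (D k) = D (k + 1) := fun k => rfl
  -- δ d is a unit
  have hu : IsUnit (δ d) := by
    obtain ⟨y, hy, z, hz, hyz⟩ := Submodule.mem_sup.mp hdist
    rw [hdgen, Ideal.mem_span_singleton'] at hy
    obtain ⟨a, ha⟩ := hy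
    rw [hdgen, Ideal.map_span, Set.image_singleton, Ideal.mem_span_singleton'] at hz
    obtain ⟨b, hb⟩ := hz
    have hpe : a * d + b * (d ^ p + (p : A) * δ d) = (p : A) := by
      rw [← hφ d, ha, hb, hyz]
    have hdp : d * d ^ (p - 1) = d ^ p := by
      have hp1 : 1 ≤ p := hp.pos
      rw [← pow_succ']
      congr 1
      omega
    have h1 : 1 - b * δ d ∈ I := by
      apply htr
      rw [hdgen, Ideal.mem_span_singleton']
      exact ⟨a + b * d ^ (p - 1), by linear_combination hpe + b * hdp⟩
    have h2 : IsUnit (b * δ d) := by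
      have := hunitJ 1 (-(1 - b * δ d)) isUnit_one (neg_mem (Ideal.mem_sup_right h1))
      simpa using this
    exact isUnit_of_mul_isUnit_right h2
  have hvunit : ∀ k, IsUnit (v k) := fun k => hu.map (iterHom φ k)
  have hDJ : ∀ k, D k ∈ J := by
    intro k
    induction k with
    | zero => exact hdJ
    | succ k ih =>
      rw [hDsucc k]
      exact add_mem (Ideal.pow_mem_of_mem J ih p hp.pos) (Ideal.mul_mem_right _ _ hpJ)
  -- regularity package
  have hCBA : ∀ k, (∀ x : A, (p : A) ∣ D k * x → (p : A) ∣ x)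
      ∧ (∀ x : A, D k ∣ (p : A) * x → D k ∣ x)
      ∧ (∀ x : A, D k * x = 0 → x = 0) := by
    intro k
    induction k with
    | zero =>
      refine ⟨?_, ?_, hdreg⟩
      · intro x ⟨z, hz⟩
        rw [hD0] at hz
        obtain ⟨c, hc⟩ := htrd z ⟨x, hz.symm⟩
        refine ⟨c, sub_eq_zero.mp (hdreg (x - (p : A) * c) ?_)⟩
        rw [hc] at hz
        linear_combination hz
      · intro x hx
        exact htrd x hx
    | succ k ih =>
      obtain ⟨hC, hB, hA⟩ := ih
      have hCiter : ∀ (m : ℕ) (x : A), (p : A) ∣ D k ^ m * x → (p : A) ∣ x := by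
        intro m
        induction m with
        | zero => intro x hx; simpa using hx
        | succ m ihm =>
          intro x hx
          apply ihm
          apply hC
          rw [show D k * (D k ^ m * x) = D k ^ (m + 1) * x by ring]
          exact hx
      have hrel := hDsucc k
      have hC1 : ∀ x : A, (p : A) ∣ D (k + 1) * x → (p : A) ∣ x := by
        intro x ⟨z, hz⟩
        apply hCiter p x
        refine ⟨z - v k * x, ?_⟩
        rw [hrel] at hz
        linear_combination hz
      refine ⟨hC1, ?_, ?_⟩
      · intro x ⟨z, hz⟩
        obtain ⟨z₁, hz₁⟩ : (p : A) ∣ z := by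
          apply hCiter p z
          refine ⟨x - v k * z, ?_⟩
          rw [hrel] at hz
          linear_combination -hz
        refine ⟨z₁, hpcan _ _ ?_⟩
        rw [hz, hz₁]
        ring
      · intro x hx
        have key : ∀ n : ℕ, ∃ y, x = (p : A) ^ n * y ∧ D (k + 1) * y = 0 := by
          intro n
          induction n with
          | zero => exact ⟨x, by simp, hx⟩
          | succ n ihn =>
            obtain ⟨y, hy, hDy⟩ := ihn
            obtain ⟨c, hc⟩ : (p : A) ∣ y := by
              apply hCiter p y
              refine ⟨-(v k * y), ?_⟩
              rw [hrel] at hDy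
              linear_combination hDy
            refine ⟨c, by rw [hy, hc, pow_succ]; ring, hpcan _ _ ?_⟩
            rw [mul_zero]
            rw [hc] at hDy
            linear_combination hDy
        exact hsep _ x hpJ fun n => ⟨(key n).choose, (key n).choose_spec.1⟩
  -- the "g" lemma: D (k+m+1) = D k ^ (p^(m+1)) + p * unit
  have hg : ∀ k m : ℕ, ∃ g : A, D (k + (m + 1)) = D k ^ p ^ (m + 1) + (p : A) * g ∧ IsUnit g := by
    intro k m
    induction m with
    | zero => exact ⟨v k, by rw [pow_one]; exact hDsucc k, hvunit k⟩
    | succ m ih =>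
      obtain ⟨g, hgeq, hgu⟩ := ih
      obtain ⟨c, hc⟩ := binom2 (D k ^ p ^ (m + 1)) ((p : A) * g) (p - 1)
      have hp1 : p - 1 + 1 = p := by have := hp.pos; omega
      rw [hp1] at hc
      have hcast : ((p - 1 : ℕ) : A) + 1 = (p : A) := by
        rw [Nat.cast_sub hp.one_lt.le]
        push_cast
        ring
      rw [hcast] at hc
      have hap : (D k ^ p ^ (m + 1)) ^ p = D k ^ p ^ (m + 1 + 1) := by
        rw [← pow_mul, ← pow_succ]
      refine ⟨v (k + (m + 1)) + (p : A) * ((D k ^ p ^ (m + 1)) ^ (p - 1) * g + g ^ 2 * c),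
        ?_, ?_⟩
      · have hidx : k + (m + 1 + 1) = (k + (m + 1)) + 1 := by omega
        rw [hidx, hDsucc, hgeq]
        linear_combination hc + hap
      · exact hunitJ _ _ (hvunit _) (Ideal.mul_mem_right _ _ hpJ)
  -- D k regular modulo D (k+m+1)
  have hreg2 : ∀ k m : ℕ, ∀ x : A, D k ∣ D (k + (m + 1)) * x → D k ∣ x := by
    intro k m x hx
    obtain ⟨g, hgeq, hgu⟩ := hg k m
    have h1 : D k ∣ (p : A) * (g * x) := by
      have h2 : D k ∣ D k ^ p ^ (m + 1) * x :=
        Dvd.dvd.mul_right (dvd_pow_self (D k) (Nat.pos_iff_ne_zero.mp (pow_pos hp.pos _))) x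
      have h4 : (p : A) * (g * x) = D (k + (m + 1)) * x - D k ^ p ^ (m + 1) * x := by
        rw [hgeq]; ring
      rw [h4]
      exact dvd_sub hx h2
    have h3 : D k ∣ g * x := (hCBA k).2.1 _ h1
    obtain ⟨c, hc⟩ := h3
    obtain ⟨w, hw⟩ := hgu.exists_right_inv
    exact ⟨c * w, by linear_combination w * hc - x * hw⟩
  -- e n is regular
  have hesucc : ∀ n, e (n + 1) = e n * D n := by
    intro n
    simp only [hedef]
    exact Finset.prod_range_succ D n
  have hereg : ∀ n, ∀ x : A, e n * x = 0 → x = 0 := by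
    intro n
    induction n with
    | zero => intro x hx; simpa [hedef] using hx
    | succ n ih =>
      intro x hx
      rw [hesucc n] at hx
      exact (hCBA n).2.2 x (ih _ (by linear_combination hx))
  -- e m regular modulo D r' for m ≤ r'
  have heS : ∀ r' m : ℕ, m ≤ r' → ∀ x : A, e m ∣ D r' * x → e m ∣ x := by
    intro r' m
    induction m with
    | zero => intro _ x _; simp [hedef]
    | succ m ih =>
      intro hmr x hx
      rw [hesucc m] at hx ⊢
      obtain ⟨x₁, hx₁⟩ := ih (le_of_lt hmr) x (dvd_trans (Dvd.intro (D m) rfl) hx)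
      obtain ⟨c, hc⟩ := hx
      have h5 : D r' * x₁ = D m * c := by
        apply sub_eq_zero.mp
        apply hereg m
        rw [hx₁] at hc
        linear_combination hc
      have h6 : D m ∣ x₁ := by
        obtain ⟨t, ht⟩ := Nat.exists_eq_add_of_lt hmr
        apply hreg2 m t
        rw [show m + (t + 1) = r' by omega]
        exact ⟨c, h5⟩
      obtain ⟨x₂, hx₂⟩ := h6
      exact ⟨x₂, by rw [hx₁, hx₂]; ring⟩
  have hinter : ∀ n : ℕ, ∀ x : A, e n ∣ x → D n ∣ x → e n * D n ∣ x := by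
    intro n x hex hDx
    obtain ⟨t, ht⟩ := hDx
    obtain ⟨t₁, ht₁⟩ := heS n n le_rfl t (ht ▸ hex)
    exact ⟨t₁, by rw [ht, ht₁]; ring⟩
  have hp2 : p - 2 + 1 = p - 1 := by have := hp.two_le; omega
  have hpdec : ∀ s : ℕ, ∃ a b : A, IsUnit b ∧ (p : A) = a * e (s + 1) + b * D (s + 1) := by
    intro s
    induction s with
    | zero =>
      obtain ⟨U, hU⟩ := hu.exists_right_inv
      have he1 : e 1 = d := by
        simp only [hedef]
        rw [Finset.prod_range_one, hD0]
      have hdp : d * d ^ (p - 1) = d ^ p := by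
        rw [← pow_succ']; congr 1; have := hp.pos; omega
      refine ⟨-(U * d ^ (p - 1)), U,
        IsUnit.of_mul_eq_one (a := U) (δ d) (by rw [mul_comm]; exact hU), ?_⟩
      rw [he1, hDsucc 0, hD0]
      have hv0 : v 0 = δ d := rfl
      rw [hv0]
      linear_combination (-(p : A)) * hU + U * hdp
    | succ s ih =>
      obtain ⟨a, b, hbu, hid⟩ := ih
      have hX : D (s + 1) ^ (p - 2) * D (s + 1) = D (s + 1) ^ (p - 1) := by
        rw [← pow_succ, hp2]
      have hWu : IsUnit (D (s + 1) ^ (p - 1) + b * v (s + 1)) := by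
        have h7 := hunitJ (b * v (s + 1)) (D (s + 1) ^ (p - 1)) (hbu.mul (hvunit _))
          (Ideal.pow_mem_of_mem J (hDJ _) _ (by have := hp.two_le; omega))
        rwa [add_comm] at h7
      obtain ⟨W', hW'⟩ := hWu.exists_right_inv
      have hPW : (p : A) * (D (s + 1) ^ (p - 1) + b * v (s + 1))
          = (a * D (s + 1) ^ (p - 2)) * (e (s + 1) * D (s + 1)) + b * D (s + 1 + 1) := by
        have hX1 : D (s + 1) * D (s + 1) ^ (p - 1) = D (s + 1) ^ p := by
          rw [← pow_succ']; congr 1; have := hp.pos; omega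
        rw [hDsucc (s + 1)]
        linear_combination D (s + 1) ^ (p - 1) * hid - (a * e (s + 1)) * hX + b * hX1
      refine ⟨a * D (s + 1) ^ (p - 2) * W', b * W',
        hbu.mul (IsUnit.of_mul_eq_one (a := W') _ (by rw [mul_comm]; exact hW')), ?_⟩
      rw [hesucc (s + 1)]
      linear_combination W' * hPW - (p : A) * hW'
  -- span descriptions of the ideals
  have hmapspan : ∀ n, I.map (iterHom φ n) = Ideal.span {D n} := by
    intro n; rw [hdgen, Ideal.map_span, Set.image_singleton]
  have hprideal : ∀ n, prIdeal φ I n = Ideal.span {e n} := by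
    intro n
    induction n with
    | zero => simp [prIdeal, hedef, Ideal.span_singleton_one]
    | succ n ih =>
      show prIdeal φ I n * I.map (iterHom φ n) = _
      rw [ih, hmapspan n, Ideal.span_singleton_mul_span_singleton, ← hesucc]
  obtain ⟨s, rfl⟩ := Nat.exists_eq_add_of_le' hr
  obtain ⟨a, b, hbu, hpe⟩ := hpdec s
  have hφe : D (s + 1) ∣ φ (e (s + 1)) := by
    have h1 : φ (e (s + 1)) = ∏ k ∈ Finset.range (s + 1), D (k + 1) := by
      rw [hedef, map_prod]
      exact Finset.prod_congr rfl fun k _ => hDphi k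
    rw [h1]
    exact Finset.dvd_prod_of_mem (fun k => D (k + 1)) (Finset.self_mem_range_succ s)
  have part1 : ∀ x y : A, x - y ∈ prIdeal φ I (s + 1) →
      x ^ p - y ^ p ∈ prIdeal φ I (s + 1) ∧ φ x - φ y ∈ I.map (iterHom φ (s + 1)) := by
    intro x y hxy
    rw [hprideal, Ideal.mem_span_singleton] at hxy
    constructor
    · rw [hprideal, Ideal.mem_span_singleton]
      exact dvd_trans hxy (sub_dvd_pow_sub_pow x y p)
    · rw [hmapspan, Ideal.mem_span_singleton, ← map_sub]
      obtain ⟨c, hc⟩ := hxy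
      rw [hc, map_mul]
      exact hφe.mul_right _
  have part2 : ∀ x : A, x ^ p - φ x ∈ prIdeal φ I (s + 1) ⊔ I.map (iterHom φ (s + 1)) := by
    intro x
    have hx : x ^ p - φ x = (-(a * δ x)) * e (s + 1) + (-(b * δ x)) * D (s + 1) := by
      rw [hφ x]; linear_combination (-(δ x)) * hpe
    rw [hx]
    exact add_mem
      (Ideal.mem_sup_left (by rw [hprideal]; exact Ideal.mem_span_singleton'.mpr ⟨_, rfl⟩))
      (Ideal.mem_sup_right (by rw [hmapspan]; exact Ideal.mem_span_singleton'.mpr ⟨_, rfl⟩))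
  -- the norm map
  set bf : A → A := fun x => x ^ p + a * δ x * e (s + 1) with hbf
  have hbe : ∀ x, e (s + 1) ∣ bf x - x ^ p := fun x => ⟨a * δ x, by simp only [hbf]; ring⟩
  have hbD : ∀ x, D (s + 1) ∣ bf x - φ x := fun x =>
    ⟨-(b * δ x), by simp only [hbf]; rw [hφ x]; linear_combination (-(δ x)) * hpe⟩
  have hmemIr : ∀ z : A, e (s + 1) ∣ z → z ∈ prIdeal φ I (s + 1) := by
    intro z hz
    rw [hprideal, Ideal.mem_span_singleton]
    exact hz
  have hmemmap : ∀ z : A, D (s + 1) ∣ z → z ∈ I.map (iterHom φ (s + 1)) := by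
    intro z hz
    rw [hmapspan, Ideal.mem_span_singleton]
    exact hz
  have hmem : ∀ z : A, e (s + 1) ∣ z → D (s + 1) ∣ z → z ∈ prIdeal φ I (s + 1 + 1) := by
    intro z h1 h2
    rw [hprideal, hesucc, Ideal.mem_span_singleton]
    exact hinter _ z h1 h2
  have hwd : ∀ x y : A, e (s + 1) ∣ x - y → bf x - bf y ∈ prIdeal φ I (s + 1 + 1) := by
    intro x y h
    apply hmem
    · have h1 : bf x - bf y = ((bf x - x ^ p) - (bf y - y ^ p)) + (x ^ p - y ^ p) := by ring
      rw [h1]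
      exact dvd_add (dvd_sub (hbe x) (hbe y)) (dvd_trans h (sub_dvd_pow_sub_pow x y p))
    · have h1 : bf x - bf y = ((bf x - φ x) - (bf y - φ y)) + (φ x - φ y) := by ring
      obtain ⟨c, hc⟩ := h
      have h2 : D (s + 1) ∣ φ x - φ y := by
        rw [← map_sub, hc, map_mul]
        exact hφe.mul_right _
      rw [h1]
      exact dvd_add (dvd_sub (hbD x) (hbD y)) h2
  have hmulmem : ∀ x y : A, bf (x * y) - bf x * bf y ∈ prIdeal φ I (s + 1 + 1) := by
    intro x y
    apply hmem
    · have h1 : bf (x * y) - bf x * bf y =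
          (bf (x * y) - (x * y) ^ p) - ((bf x - x ^ p) * bf y + x ^ p * (bf y - y ^ p)) := by
        ring
      rw [h1]
      exact dvd_sub (hbe _) (dvd_add ((hbe x).mul_right _) ((hbe y).mul_left _))
    · have h1 : bf (x * y) - bf x * bf y =
          (bf (x * y) - φ (x * y)) - ((bf x - φ x) * bf y + φ x * (bf y - φ y)) := by
        rw [map_mul]; ring
      rw [h1]
      exact dvd_sub (hbD _) (dvd_add ((hbD x).mul_right _) ((hbD y).mul_left _))
  have hone : bf 1 - 1 ∈ prIdeal φ I (s + 1 + 1) := by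
    apply hmem
    · have h1 : bf 1 - 1 = bf 1 - (1 : A) ^ p := by rw [one_pow]
      rw [h1]; exact hbe 1
    · have h1 : bf 1 - 1 = bf 1 - φ 1 := by rw [map_one]
      rw [h1]; exact hbD 1
  refine ⟨part1, part2, ?_⟩
  set mk1 := Ideal.Quotient.mk (prIdeal φ I (s + 1)) with hmk1
  set mk2 := Ideal.Quotient.mk (prIdeal φ I (s + 1 + 1)) with hmk2
  have hse : ∀ x y : A, mk1 x = mk1 y → e (s + 1) ∣ x - y := by
    intro x y h
    have h2 := Ideal.Quotient.eq.mp h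
    rwa [hprideal, Ideal.mem_span_singleton] at h2
  set sec : (A ⧸ prIdeal φ I (s + 1)) → A :=
    Function.surjInv Ideal.Quotient.mk_surjective with hsecdef
  have hsec : ∀ x, mk1 (sec x) = x := fun x => Function.surjInv_eq _ x
  refine ⟨⟨⟨fun x => mk2 (bf (sec x)), ?_⟩, ?_⟩, ?_⟩
  · -- map_one
    have h1 : e (s + 1) ∣ sec 1 - 1 := hse _ _ (by rw [hsec, map_one])
    have h5 := add_mem (hwd (sec 1) 1 h1) hone
    have h6 : bf (sec 1) - bf 1 + (bf 1 - 1) = bf (sec 1) - 1 := by ring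
    rw [h6] at h5
    rw [show (1 : A ⧸ prIdeal φ I (s + 1 + 1)) = mk2 1 from (map_one mk2).symm]
    exact Ideal.Quotient.eq.mpr h5
  · -- map_mul
    intro x y
    show mk2 (bf (sec (x * y))) = mk2 (bf (sec x)) * mk2 (bf (sec y))
    rw [← map_mul]
    apply Ideal.Quotient.eq.mpr
    have h1 : e (s + 1) ∣ sec (x * y) - sec x * sec y :=
      hse _ _ (by rw [hsec, map_mul, hsec, hsec])
    have h4 := add_mem (hwd _ _ h1) (hmulmem (sec x) (sec y))
    have h6 : bf (sec (x * y)) - bf (sec x * sec y) +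
        (bf (sec x * sec y) - bf (sec x) * bf (sec y)) =
        bf (sec (x * y)) - bf (sec x) * bf (sec y) := by ring
    rwa [h6] at h4
  · -- the spec
    intro t
    have h1 : e (s + 1) ∣ sec (mk1 t) - t := hse _ _ (hsec _)
    refine ⟨bf (sec (mk1 t)), rfl, ?_, ?_⟩
    · apply hmemIr
      have h2 : bf (sec (mk1 t)) - t ^ p =
          (bf (sec (mk1 t)) - (sec (mk1 t)) ^ p) + ((sec (mk1 t)) ^ p - t ^ p) := by ring
      rw [h2]
      exact dvd_add (hbe _) (dvd_trans h1 (sub_dvd_pow_sub_pow _ _ p))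
    · apply hmemmap
      obtain ⟨c, hc⟩ := h1
      have h2 : D (s + 1) ∣ φ (sec (mk1 t)) - φ t := by
        rw [← map_sub, hc, map_mul]
        exact hφe.mul_right _
      have h3 : bf (sec (mk1 t)) - φ t =
          (bf (sec (mk1 t)) - φ (sec (mk1 t))) + (φ (sec (mk1 t)) - φ t) := by ring
      rw [h3]
      exact dvd_add (hbD _) h2
end

section
/- Let p > 2 and (A, I) a transversal prism, r ≥ 1. The two multiplicative maps A/I_r² → A/I_r² given by x ↦ x^p, and A/I_r² → A/(φ^r)(I) given by the composite A/I_r² → A/(φ^{r-1})(I) →^{φ} A/(φ^r)(I), agree after composing with the quotients to A/(I_r² + (φ^r)(I)). Hence they glue to a multiplicative map A/I_r² → A/(I_r·I_{r+1}) via the Cartesian square A/(I_r² (φ^r)(I)) ≅ A/I_r² ×_{A/(I_r² + (φ^r)(I))} A/(φ^r)(I). -/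
namespace Statement13Aux

/-- product of the `φ^i(d)`, `i < r` : a generator of `I_r`. -/
def prGen {A : Type*} [CommRing A] (φ : A →+* A) (d : A) (r : ℕ) : A :=
  ∏ i ∈ Finset.range r, iterHom φ i d

variable {A : Type*} [CommRing A]

lemma iterHom_succ_apply (φ : A →+* A) (n : ℕ) (x : A) :
    iterHom φ (n + 1) x = φ (iterHom φ n x) := rfl

lemma iterHom_comm (φ : A →+* A) (n : ℕ) (x : A) :
    iterHom φ n (φ x) = φ (iterHom φ n x) := by
  induction n with
  | zero => rfl
  | succ n ih => rw [iterHom_succ_apply, iterHom_succ_apply, ih]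

lemma pow_add_decomp (a b : A) (n : ℕ) : ∃ c, (a + b) ^ n = b ^ n + a * c := by
  obtain ⟨c, hc⟩ := sub_dvd_pow_sub_pow (a + b) b n
  exact ⟨c, by linear_combination hc⟩

/-- Distilled hypotheses for a transversal prism with distinguished generator `d`,
`v = δ d`. -/
structure Setup (p : ℕ) (φ : A →+* A) (d v : A) : Prop where
  pnz : ∀ x : A, (p : A) * x = 0 → x = 0
  dnz : ∀ x : A, d * x = 0 → x = 0
  dtf : ∀ x : A, (p : A) * x ∈ Ideal.span {d} → x ∈ Ideal.span {d}
  haus : ∀ x : A, (∀ n, x ∈ (Ideal.span {(p : A)} ⊔ Ideal.span {d}) ^ n) → x = 0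
  jac : ∀ z ∈ (Ideal.span {(p : A)} ⊔ Ideal.span {d}), IsUnit (1 + z)
  hv : (p : A) * v = φ d - d ^ p
  vu : IsUnit v
  hp3 : 3 ≤ p

namespace Setup

variable {p : ℕ} {φ : A →+* A} {d v : A} (S : Setup p φ d v)
set_option linter.unusedSectionVars false

include S

lemma p_mem : (p : A) ∈ (Ideal.span {(p : A)} ⊔ Ideal.span {d}) :=
  Submodule.mem_sup_left (Ideal.mem_span_singleton.2 dvd_rfl)

lemma d_mem : d ∈ (Ideal.span {(p : A)} ⊔ Ideal.span {d}) :=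
  Submodule.mem_sup_right (Ideal.mem_span_singleton.2 dvd_rfl)

lemma g_succ (s : ℕ) :
    iterHom φ (s + 1) d = (iterHom φ s d) ^ p + (p : A) * iterHom φ s v := by
  have h1 : φ d = d ^ p + (p : A) * v := by linear_combination -S.hv
  have : iterHom φ (s + 1) d = iterHom φ s (φ d) := (iterHom_comm φ s d).symm
  rw [this, h1]
  simp [map_add, map_pow, map_mul, map_natCast]

lemma vu_iter (s : ℕ) : IsUnit (iterHom φ s v) := S.vu.map _

lemma g_mem (s : ℕ) : iterHom φ s d ∈ (Ideal.span {(p : A)} ⊔ Ideal.span {d}) := by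
  induction s with
  | zero => exact S.d_mem
  | succ s ih =>
      rw [S.g_succ s]
      refine Ideal.add_mem _ ?_ (Ideal.mul_mem_right _ _ S.p_mem)
      have : iterHom φ s d ^ p = iterHom φ s d ^ (p-1) * iterHom φ s d := by
        rw [← pow_succ]; congr 1; have := S.hp3; omega
      rw [this]
      exact Ideal.mul_mem_left _ _ ih

lemma span_g_le (i : ℕ) :
    Ideal.span {iterHom φ i d} ≤ Ideal.span {(p : A)} ⊔ Ideal.span {d} := by
  rw [Ideal.span_le, Set.singleton_subset_iff]; exact S.g_mem i

lemma d_nzd_modp : ∀ x : A, d * x ∈ Ideal.span {(p : A)} → x ∈ Ideal.span {(p : A)} := by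
  intro x hx
  obtain ⟨y, hy⟩ := Ideal.mem_span_singleton.1 hx
  have h1 : (p : A) * y ∈ Ideal.span {d} := by
    rw [← hy]; exact Ideal.mul_mem_right _ _ (Ideal.mem_span_singleton.2 dvd_rfl)
  obtain ⟨y', hy'⟩ := Ideal.mem_span_singleton.1 (S.dtf y h1)
  have h2 : d * (x - (p : A) * y') = 0 := by
    rw [hy'] at hy; linear_combination hy
  have h3 := S.dnz _ h2
  exact Ideal.mem_span_singleton.2 ⟨y', by linear_combination h3⟩

lemma g_nzd_modp (i : ℕ) :
    ∀ x : A, iterHom φ i d * x ∈ Ideal.span {(p : A)} → x ∈ Ideal.span {(p : A)} := by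
  induction i with
  | zero => exact fun x hx => S.d_nzd_modp x hx
  | succ i ih =>
    have pow : ∀ k, ∀ x : A, iterHom φ i d ^ k * x ∈ Ideal.span {(p : A)} →
        x ∈ Ideal.span {(p : A)} := by
      intro k
      induction k with
      | zero => intro x hx; simpa using hx
      | succ k ihk =>
        intro x hx
        apply ihk
        apply ih
        have : iterHom φ i d * (iterHom φ i d ^ k * x) = iterHom φ i d ^ (k+1) * x := by ring
        rw [this]; exact hx
    intro x hx
    rw [S.g_succ i] at hx
    have h1 : iterHom φ i d ^ p * x ∈ Ideal.span {(p : A)} := by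
      have he : iterHom φ i d ^ p * x =
          (iterHom φ i d ^ p + (p : A) * iterHom φ i v) * x
            - (p : A) * (iterHom φ i v * x) := by ring
      rw [he]
      exact Ideal.sub_mem _ hx
        (Ideal.mul_mem_right _ _ (Ideal.mem_span_singleton.2 dvd_rfl))
    exact pow p x h1

/-- joint regularity: `φ^i(d)` is a nonzerodivisor and `A/(φ^i(d))` is `p`-torsion-free. -/
lemma reg (i : ℕ) : (∀ x : A, iterHom φ i d * x = 0 → x = 0) ∧
    (∀ x : A, (p : A) * x ∈ Ideal.span {iterHom φ i d} →
      x ∈ Ideal.span {iterHom φ i d}) := by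
  induction i with
  | zero => exact ⟨S.dnz, S.dtf⟩
  | succ i ih =>
    obtain ⟨ihnz, ihtf⟩ := ih
    set c := iterHom φ i d with hc
    have hu := S.vu_iter i
    set u := iterHom φ i v with huset
    have hsucc : iterHom φ (i+1) d = c ^ p + (p : A) * u := S.g_succ i
    have cancel : ∀ a b : A, c * a = c * b → a = b := by
      intro a b h
      have h0 : c * (a - b) = 0 := by linear_combination h
      have := ihnz _ h0; linear_combination this
    obtain ⟨w, hwu⟩ := hu.exists_left_inv
    constructor
    · intro x hx
      rw [hsucc] at hx
      have key : ∀ n, ∀ x : A, (c ^ p + (p : A) * u) * x = 0 →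
          x ∈ Ideal.span {c} ^ n := by
        intro n
        induction n with
        | zero => intro x _; simp
        | succ n ihn =>
          intro x hx0
          have h1 : (p : A) * (u * x) ∈ Ideal.span {c} := by
            have hpp : c ^ p = c ^ (p-1) * c := by
              rw [← pow_succ]; congr 1; have := S.hp3; omega
            have he : (p : A) * (u * x) =
                (c ^ p + (p : A) * u) * x - c * (c ^ (p-1) * x) := by
              rw [hpp]; ring
            rw [he, hx0]
            refine Ideal.sub_mem _ (Ideal.zero_mem _) ?_
            exact Ideal.mul_mem_right _ _ (Ideal.mem_span_singleton.2 dvd_rfl)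
          obtain ⟨t, ht⟩ := Ideal.mem_span_singleton.1 (ihtf _ h1)
          have hx1 : x = c * (w * t) := by linear_combination w * ht - x * hwu
          have hx2 : (c ^ p + (p : A) * u) * (w * t) = 0 := by
            apply cancel _ 0
            rw [mul_zero]
            calc c * ((c ^ p + (p:A) * u) * (w * t))
                = (c ^ p + (p:A) * u) * (c * (w * t)) := by ring
              _ = 0 := by rw [← hx1, hx0]
          have h3 := ihn _ hx2
          rw [Ideal.span_singleton_pow] at h3 ⊢
          obtain ⟨m, hm⟩ := Ideal.mem_span_singleton.1 h3
          exact Ideal.mem_span_singleton.2 ⟨m, by rw [hx1, hm, pow_succ]; ring⟩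
      have hmem : ∀ n, x ∈ (Ideal.span {(p : A)} ⊔ Ideal.span {d}) ^ n := fun n =>
        Ideal.pow_right_mono (by rw [hc]; exact S.span_g_le i) n (key n x hx)
      exact S.haus x hmem
    · intro x hx
      rw [hsucc] at hx ⊢
      obtain ⟨y, hy⟩ := Ideal.mem_span_singleton.1 hx
      have desc : ∀ m, ∀ w : A, (p : A) * w = c ^ m * y → ∃ w', (p : A) * w' = y := by
        intro m
        induction m with
        | zero => intro w hw; exact ⟨w, by simpa using hw⟩
        | succ m ihm =>
          intro w₀ hw₀
          have h1 : (p : A) * w₀ ∈ Ideal.span {c} := by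
            rw [hw₀]
            exact Ideal.mem_span_singleton.2 ⟨c ^ m * y, by ring⟩
          obtain ⟨w₁, hw₁⟩ := Ideal.mem_span_singleton.1 (ihtf _ h1)
          have h2 : c * ((p : A) * w₁) = c * (c ^ m * y) := by
            rw [hw₁] at hw₀; linear_combination hw₀
          exact ihm w₁ (cancel _ _ h2)
      have hkey : (p : A) * (x - u * y) = c ^ p * y := by linear_combination hy
      obtain ⟨w', hw'⟩ := desc p _ hkey
      have h0 : (p : A) * (x - (c ^ p + (p : A) * u) * w') = 0 := by
        linear_combination hy - (c ^ p + (p : A) * u) * hw'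
      have := S.pnz _ h0
      exact Ideal.mem_span_singleton.2 ⟨w', by linear_combination this⟩

/-- For `i < j`, `φ^j(d) = p·w + φ^i(d)·t` with `w` a unit. -/
lemma g_decomp {i j : ℕ} (hij : i < j) :
    ∃ w t : A, iterHom φ j d = (p : A) * w + iterHom φ i d * t ∧ IsUnit w := by
  induction j with
  | zero => omega
  | succ k ihk =>
    rcases Nat.lt_succ_iff_lt_or_eq.1 hij with h | h
    · obtain ⟨w, t, hwt, hw⟩ := ihk h
      obtain ⟨winv, hwinv⟩ := (S.vu_iter k).exists_left_inv
      obtain ⟨cc, hcc⟩ := pow_add_decomp ((iterHom φ i d) * t) ((p:A) * w) p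
      refine ⟨(p:A)^(p-1) * w ^ p + iterHom φ k v, t * cc, ?_, ?_⟩
      · rw [S.g_succ k, hwt]
        have hpp : ((p:A) * w) ^ p = (p : A) * ((p:A)^(p-1) * w ^ p) := by
          have h0 : (p:A)^p = (p:A) * (p:A)^(p-1) := by
            rw [← pow_succ']; congr 1; have := S.hp3; omega
          rw [mul_pow, h0]; ring
        linear_combination hcc + hpp
      · have hz : (1 + winv * ((p:A)^(p-1) * w ^ p)) * iterHom φ k v =
            (p:A)^(p-1) * w ^ p + iterHom φ k v := by
          linear_combination ((p:A)^(p-1) * w^p) * hwinv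
        rw [← hz]
        refine (IsUnit.mul ?_ (S.vu_iter k))
        apply S.jac
        have h1 : (p : A) ∈ Ideal.span {(p : A)} ⊔ Ideal.span {d} := S.p_mem
        have he : winv * ((p:A)^(p-1) * w ^ p) =
            (p:A) * (winv * (p:A)^(p-2) * w ^ p) := by
          have : (p:A)^(p-1) = (p:A) * (p:A)^(p-2) := by
            rw [← pow_succ']; congr 1; have := S.hp3; omega
          rw [this]; ring
        rw [he]
        exact Ideal.mul_mem_right _ _ h1
    · subst h
      exact ⟨iterHom φ i v, iterHom φ i d ^ (p-1), by
        rw [S.g_succ i]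
        have : iterHom φ i d ^ p = iterHom φ i d * iterHom φ i d ^ (p-1) := by
          rw [← pow_succ']; congr 1; have := S.hp3; omega
        rw [this]; ring, S.vu_iter i⟩

/-- For `i < j`, `φ^j(d) = φ^i(d)^(p^(j-i)) + p·c`. -/
lemma g_pow_decomp {i j : ℕ} (hij : i < j) :
    ∃ c : A, iterHom φ j d = iterHom φ i d ^ (p ^ (j - i)) + (p : A) * c := by
  induction j with
  | zero => omega
  | succ k ihk =>
    rcases Nat.lt_succ_iff_lt_or_eq.1 hij with h | h
    · obtain ⟨c, hcd⟩ := ihk h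
      obtain ⟨cc, hcc⟩ := pow_add_decomp ((p:A) * c) (iterHom φ i d ^ (p ^ (k - i))) p
      refine ⟨c * cc + iterHom φ k v, ?_⟩
      rw [S.g_succ k, hcd]
      have hqp : (iterHom φ i d ^ p ^ (k - i)) ^ p = iterHom φ i d ^ p ^ (k + 1 - i) := by
        rw [← pow_mul, ← pow_succ]
        congr 2
        omega
      linear_combination hcc + hqp
    · subst h
      refine ⟨iterHom φ i v, ?_⟩
      rw [S.g_succ i]
      have : p ^ (i + 1 - i) = p := by simp
      rw [this]

/-- For `i < j`, `φ^i(d)` is a nonzerodivisor mod `φ^j(d)`. -/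
lemma g_cross {i j : ℕ} (hij : i < j) :
    ∀ x : A, iterHom φ i d * x ∈ Ideal.span {iterHom φ j d} →
      x ∈ Ideal.span {iterHom φ j d} := by
  intro x hx
  obtain ⟨y, hy⟩ := Ideal.mem_span_singleton.1 hx
  -- hy : g_i * x = g_j * y
  obtain ⟨c, hcd⟩ := S.g_pow_decomp hij
  set q := p ^ (j - i) with hq
  have hq1 : 1 ≤ q := Nat.one_le_iff_ne_zero.2 (pow_ne_zero _ (by have := S.hp3; omega))
  set g := iterHom φ i d with hg
  have hgq : g ^ q = g * g ^ (q - 1) := by rw [← pow_succ']; congr 1; omega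
  have hy2 : g * x = (g * g ^ (q-1) + (p : A) * c) * y := by rw [hy, hcd, hgq]
  have h1 : g * (x - g ^ (q-1) * y) ∈ Ideal.span {(p : A)} := by
    refine Ideal.mem_span_singleton.2 ⟨c * y, ?_⟩
    linear_combination hy2
  obtain ⟨s, hs⟩ := Ideal.mem_span_singleton.1 (S.g_nzd_modp i _ h1)
  -- hs : x - g^(q-1) y = p * s
  have h2 : (p : A) * (g * s - c * y) = 0 := by
    linear_combination hy2 - g * hs
  have h3 : g * s = c * y := by have := S.pnz _ h2; linear_combination this
  obtain ⟨w, t, hwt, hwu⟩ := S.g_decomp hij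
  have h4 : (p : A) * (c - w) ∈ Ideal.span {g} := by
    refine Ideal.mem_span_singleton.2 ⟨t - g ^ (q-1), ?_⟩
    linear_combination hwt - hcd - hgq
  obtain ⟨q', hq'⟩ := Ideal.mem_span_singleton.1 ((S.reg i).2 _ h4)
  -- hq' : c - w = g * q'
  obtain ⟨winv, hwinv⟩ := hwu.exists_left_inv
  have hwy : w * y = g * (s - q' * y) := by linear_combination -h3 - y * hq'
  have h5 : y = g * (winv * (s - q' * y)) := by
    linear_combination winv * hwy - y * hwinv
  have h6 : g * (x - iterHom φ j d * (winv * (s - q' * y))) = 0 := by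
    linear_combination hy + iterHom φ j d * h5
  have h7 := (S.reg i).1 _ h6
  exact Ideal.mem_span_singleton.2 ⟨winv * (s - q' * y), by linear_combination h7⟩

/-- nonzerodivisor property of products `∏ φ^i(d)` modulo `φ^j(d)`. -/
lemma prod_cross {j : ℕ} (t : Finset ℕ) (ht : ∀ i ∈ t, i < j) :
    ∀ x : A, (∏ i ∈ t, iterHom φ i d) * x ∈ Ideal.span {iterHom φ j d} →
      x ∈ Ideal.span {iterHom φ j d} := by
  induction t using Finset.induction_on with
  | empty => intro x hx; simpa using hx
  | @insert a t ha ih =>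
    intro x hx
    rw [Finset.prod_insert ha] at hx
    have h1 : iterHom φ a d * ((∏ i ∈ t, iterHom φ i d) * x) ∈
        Ideal.span {iterHom φ j d} := by
      have he : iterHom φ a d * ((∏ i ∈ t, iterHom φ i d) * x) =
          iterHom φ a d * (∏ i ∈ t, iterHom φ i d) * x := by ring
      rw [he]; exact hx
    exact ih (fun i hi => ht i (Finset.mem_insert_of_mem hi)) x
      (S.g_cross (ht a (Finset.mem_insert_self a t)) _ h1)

lemma prGen_cross (r : ℕ) :
    ∀ x : A, prGen φ d r * x ∈ Ideal.span {iterHom φ r d} →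
      x ∈ Ideal.span {iterHom φ r d} :=
  S.prod_cross (Finset.range r) (fun i hi => Finset.mem_range.1 hi)

lemma prGen_sq_cross (r : ℕ) :
    ∀ x : A, prGen φ d r ^ 2 * x ∈ Ideal.span {iterHom φ r d} →
      x ∈ Ideal.span {iterHom φ r d} := by
  intro x hx
  apply S.prGen_cross r
  apply S.prGen_cross r
  have he : prGen φ d r * (prGen φ d r * x) = prGen φ d r ^ 2 * x := by ring
  rw [he]; exact hx

/-- the intersection `(e_r²) ∩ (g_r) = (e_r² g_r)`. -/
lemma inter_eq (r : ℕ) {z : A} (h1 : z ∈ Ideal.span {prGen φ d r ^ 2})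
    (h2 : z ∈ Ideal.span {iterHom φ r d}) :
    z ∈ Ideal.span {prGen φ d r ^ 2 * iterHom φ r d} := by
  obtain ⟨x, hx⟩ := Ideal.mem_span_singleton.1 h1
  have h3 : prGen φ d r ^ 2 * x ∈ Ideal.span {iterHom φ r d} := by rw [← hx]; exact h2
  obtain ⟨t, ht⟩ := Ideal.mem_span_singleton.1 (S.prGen_sq_cross r x h3)
  exact Ideal.mem_span_singleton.2 ⟨t, by rw [hx, ht]; ring⟩

/-- key inductive claim : `φ^j(d)^(p-2) = p^(p-2)·S + e_j²·C` with `S` a unit. -/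
lemma X_claim (j : ℕ) : ∃ S C : A, IsUnit S ∧
    iterHom φ j d ^ (p - 2) = (p : A) ^ (p - 2) * S + prGen φ d j ^ 2 * C := by
  induction j with
  | zero =>
    refine ⟨1, d ^ (p-2) - (p : A) ^ (p-2), isUnit_one, ?_⟩
    have h0 : prGen φ d 0 = 1 := Finset.prod_range_zero _
    have h1 : iterHom φ 0 d = d := rfl
    rw [h0, h1]; ring
  | succ j ih =>
    obtain ⟨SS, C, hS, hX⟩ := ih
    obtain ⟨c, hc⟩ := pow_add_decomp (iterHom φ j d ^ p) ((p : A) * iterHom φ j v) (p-2)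
    set g := iterHom φ j d with hg
    have hgp : g ^ p = g ^ 2 * g ^ (p-2) := by
      rw [← pow_add]; congr 1; have := S.hp3; omega
    have hmp : ((p : A) * iterHom φ j v) ^ (p-2) =
        (p : A) ^ (p-2) * iterHom φ j v ^ (p-2) := mul_pow _ _ _
    have hprod : prGen φ d (j+1) = prGen φ d j * g := Finset.prod_range_succ _ _
    refine ⟨iterHom φ j v ^ (p-2) + g^2 * c * SS, c * C, ?_, ?_⟩
    · have hW : IsUnit (iterHom φ j v ^ (p-2)) := (S.vu_iter j).pow _
      obtain ⟨Wi, hWi⟩ := hW.exists_left_inv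
      have he : iterHom φ j v ^ (p-2) + g^2 * c * SS =
          iterHom φ j v ^ (p-2) * (1 + Wi * (g^2 * c * SS)) := by
        linear_combination -(g^2*c*SS) * hWi
      rw [he]
      refine hW.mul (S.jac _ ?_)
      have : Wi * (g^2 * c * SS) = g * (g * Wi * c * SS) := by ring
      rw [this]
      exact Ideal.mul_mem_right _ _ (S.g_mem j)
    · have hsucc : iterHom φ (j+1) d = g ^ p + (p : A) * iterHom φ j v := S.g_succ j
      rw [hsucc, hprod]
      linear_combination hc + hmp + c * hgp + g^2 * c * hX

/-- Lemma A: `p ∈ I_r² + (φ^r)(I)` for `r ≥ 1`. -/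
lemma lemA {r : ℕ} (hr : 1 ≤ r) :
    ∃ y z : A, (p : A) = y + z ∧ y ∈ Ideal.span {prGen φ d r ^ 2} ∧
      z ∈ Ideal.span {iterHom φ r d} := by
  obtain ⟨j, rfl⟩ : ∃ j, r = j + 1 := ⟨r - 1, by omega⟩
  obtain ⟨SS, C, hSu, hX⟩ := S.X_claim j
  set g := iterHom φ j d with hg
  have hid : (p : A) * iterHom φ j v = iterHom φ (j+1) d - g ^ p := by
    linear_combination -(S.g_succ j)
  have hgp : g ^ p = g ^ 2 * g ^ (p-2) := by
    rw [← pow_add]; congr 1; have := S.hp3; omega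
  have hp32 : (p : A) ^ (p-2) = (p : A) * (p : A) ^ (p-3) := by
    rw [← pow_succ']; congr 1; have := S.hp3; omega
  have hprod : prGen φ d (j+1) = prGen φ d j * g := Finset.prod_range_succ _ _
  have hkey : (p : A) * (iterHom φ j v + (p : A) ^ (p-3) * SS * g ^ 2) =
      iterHom φ (j+1) d - prGen φ d (j+1) ^ 2 * C := by
    rw [hprod]
    linear_combination hid - hgp - g^2 * hX - g^2 * SS * hp32
  have hU : IsUnit (iterHom φ j v + (p : A) ^ (p-3) * SS * g ^ 2) := by
    obtain ⟨vi, hvi⟩ := (S.vu_iter j).exists_left_inv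
    have he : iterHom φ j v + (p : A) ^ (p-3) * SS * g ^ 2 =
        iterHom φ j v * (1 + vi * ((p : A) ^ (p-3) * SS * g ^ 2)) := by
      linear_combination -((p : A)^(p-3)*SS*g^2) * hvi
    rw [he]
    refine (S.vu_iter j).mul (S.jac _ ?_)
    have : vi * ((p : A) ^ (p-3) * SS * g ^ 2) = g * (g * vi * (p:A)^(p-3) * SS) := by ring
    rw [this]
    exact Ideal.mul_mem_right _ _ (S.g_mem j)
  obtain ⟨Ui, hUi⟩ := hU.exists_left_inv
  refine ⟨prGen φ d (j+1) ^ 2 * (-(Ui * C)), Ui * iterHom φ (j+1) d, ?_, ?_, ?_⟩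
  · linear_combination Ui * hkey - (p : A) * hUi
  · exact Ideal.mem_span_singleton.2 ⟨-(Ui * C), rfl⟩
  · exact Ideal.mem_span_singleton.2 ⟨Ui, mul_comm _ _⟩

end Setup
lemma g_dvd_phi_prGen (φ : A →+* A) (d : A) {r : ℕ} (hr : 1 ≤ r) :
    iterHom φ r d ∣ φ (prGen φ d r) := by
  have h1 : φ (prGen φ d r) = ∏ i ∈ Finset.range r, φ (iterHom φ i d) :=
    map_prod φ _ _
  rw [h1]
  have h2 : r - 1 ∈ Finset.range r := Finset.mem_range.2 (by omega)
  have h3 : φ (iterHom φ (r-1) d) = iterHom φ r d := by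
    have he : r - 1 + 1 = r := by omega
    rw [← he]; rfl
  rw [← h3]
  exact Finset.dvd_prod_of_mem _ h2

end Statement13Aux

open Statement13Aux

/-- Construction 2.18: for an odd prime `p > 2` and a transversal prism `(A, I)`, `r ≥ 1`,
the map `x ↦ x^p : A/I_r² → A/I_r²` and the composite `A/I_r² → A/(φ^(r-1))(I) →^φ A/(φ^r)(I)`
agree after passing to `A/(I_r² + (φ^r)(I))` (i.e. `x^p ≡ φ(x)` mod `I_r² + (φ^r)(I)`),
hence glue to a multiplicative map `A/I_r² → A/(I_r·I_{r+1})` via the Cartesian square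
`A/(I_r²·(φ^r)(I)) ≅ A/I_r² ×_{A/(I_r² + (φ^r)(I))} A/(φ^r)(I)`. -/
theorem statement13
    (p : ℕ) (hp : p.Prime) {A : Type*} [CommRing A]
    (δ : A → A) (φ : A →+* A) (I : Ideal A) (d : A)
    (hdgen : I = Ideal.span {d}) (hdnz : d ∈ nonZeroDivisors A)
    (hφ : ∀ x : A, φ x = x ^ p + (p : A) * δ x)
    (hδ1 : δ 1 = 0)
    (hδadd : ∀ x y : A, δ (x + y) =
      δ x + δ y - ∑ i ∈ Finset.Ioo 0 p, ((p.choose i / p : ℕ) : A) * x ^ i * y ^ (p - i))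
    (hδmul : ∀ x y : A, δ (x * y) =
      x ^ p * δ y + y ^ p * δ x + (p : A) * δ x * δ y)
    (hcomplete : IsAdicComplete (Ideal.span {(p : A)} ⊔ I) A)
    (hdist : (p : A) ∈ I ⊔ I.map φ)
    (htrans : ∀ x : A ⧸ I, (p : A ⧸ I) * x = 0 → x = 0)
    (hp2 : 2 < p) (r : ℕ) (hr : 1 ≤ r) :
    (∀ a : A, a ^ p - φ a ∈ (prIdeal φ I r) ^ 2 ⊔ I.map (iterHom φ r)) ∧
    ∃ N : (A ⧸ (prIdeal φ I r) ^ 2) →* (A ⧸ (prIdeal φ I r * prIdeal φ I (r + 1))),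
      ∀ a : A, ∃ b : A,
        Ideal.Quotient.mk (prIdeal φ I r * prIdeal φ I (r + 1)) b =
          N (Ideal.Quotient.mk ((prIdeal φ I r) ^ 2) a) ∧
        b - a ^ p ∈ (prIdeal φ I r) ^ 2 ∧ b - φ a ∈ I.map (iterHom φ r) := by
  subst hdgen
  set v : A := δ d with hvdef
  -- basic facts
  have hdnz' : ∀ x : A, d * x = 0 → x = 0 := by
    intro x hx
    exact hdnz.2 x (by rw [mul_comm]; exact hx)
  have hdtf : ∀ x : A, (p : A) * x ∈ Ideal.span {d} → x ∈ Ideal.span {d} := by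
    intro x hx
    have h1 : Ideal.Quotient.mk (Ideal.span {d}) ((p : A) * x) = 0 :=
      Ideal.Quotient.eq_zero_iff_mem.2 hx
    rw [map_mul, map_natCast] at h1
    exact Ideal.Quotient.eq_zero_iff_mem.1 (htrans _ h1)
  have hhaus : ∀ x : A, (∀ n, x ∈ (Ideal.span {(p : A)} ⊔ Ideal.span {d}) ^ n) → x = 0 := by
    intro x hx
    have hH : IsHausdorff (Ideal.span {(p : A)} ⊔ Ideal.span {d}) A := hcomplete.toIsHausdorff
    exact hH.haus x (fun n => SModEq.zero.2 (by simpa [smul_eq_mul] using hx n))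
  have hjac : ∀ z ∈ (Ideal.span {(p : A)} ⊔ Ideal.span {d}), IsUnit (1 + z) := by
    intro z hz
    have h1 := IsAdicComplete.le_jacobson_bot (Ideal.span {(p : A)} ⊔ Ideal.span {d}) hz
    have h2 := Ideal.mem_jacobson_bot.1 h1 1
    simpa [add_comm] using h2
  have hvid : (p : A) * v = φ d - d ^ p := by linear_combination -(hφ d)
  have hvu : IsUnit v := by
    rw [Ideal.map_span, Set.image_singleton] at hdist
    obtain ⟨y, hy, z, hz, hyz⟩ := Submodule.mem_sup.1 hdist
    obtain ⟨a, rfl⟩ := Ideal.mem_span_singleton.1 hy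
    obtain ⟨b, rfl⟩ := Ideal.mem_span_singleton.1 hz
    have h1 : (p : A) * (1 - v * b) ∈ Ideal.span {d} := by
      refine Ideal.mem_span_singleton.2 ⟨a + d ^ (p-1) * b, ?_⟩
      have hdp : d ^ p = d * d ^ (p-1) := by
        rw [← pow_succ']; congr 1; omega
      linear_combination -hyz + b * hφ d + b * hdp
    obtain ⟨cc, hcc⟩ := Ideal.mem_span_singleton.1 (hdtf _ h1)
    have h3 : IsUnit (v * b) := by
      have he : v * b = 1 + (-(d * cc)) := by linear_combination -hcc
      rw [he]
      refine hjac _ (neg_mem (Submodule.mem_sup_right ?_))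
      exact Ideal.mem_span_singleton.2 ⟨cc, rfl⟩
    exact isUnit_of_mul_isUnit_left h3
  have hpnz : ∀ x : A, (p : A) * x = 0 → x = 0 := by
    have key : ∀ n, ∀ x : A, (p : A) * x = 0 → x ∈ Ideal.span {d} ^ n := by
      intro n
      induction n with
      | zero => intro x _; simp
      | succ n ihn =>
        intro x hx
        have h1 : (p : A) * x ∈ Ideal.span {d} := by rw [hx]; exact zero_mem _
        obtain ⟨x₁, hx₁⟩ := Ideal.mem_span_singleton.1 (hdtf x h1)
        have h2 : (p : A) * x₁ = 0 := by
          apply hdnz'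
          rw [hx₁] at hx; linear_combination hx
        have h3 := ihn x₁ h2
        rw [Ideal.span_singleton_pow] at h3 ⊢
        obtain ⟨m, hm⟩ := Ideal.mem_span_singleton.1 h3
        exact Ideal.mem_span_singleton.2 ⟨m, by rw [hx₁, hm, pow_succ]; ring⟩
    intro x hx
    exact hhaus x (fun n => Ideal.pow_right_mono le_sup_right n (key n x hx))
  have S : Statement13Aux.Setup p φ d v :=
    ⟨hpnz, hdnz', hdtf, hhaus, hjac, hvid, hvu, by omega⟩
  -- ideal identifications
  have hmapr : ∀ n, Ideal.map (iterHom φ n) (Ideal.span {d}) =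
      Ideal.span {iterHom φ n d} := by
    intro n; rw [Ideal.map_span, Set.image_singleton]
  have hpr : ∀ n, prIdeal φ (Ideal.span {d}) n = Ideal.span {prGen φ d n} := by
    intro n
    induction n with
    | zero =>
      show (⊤ : Ideal A) = _
      rw [show prGen φ d 0 = 1 from Finset.prod_range_zero _, Ideal.span_singleton_one]
    | succ n ihn =>
      show prIdeal φ (Ideal.span {d}) n * Ideal.map (iterHom φ n) (Ideal.span {d}) = _
      rw [ihn, hmapr n, Ideal.span_singleton_mul_span_singleton,
        show prGen φ d (n+1) = prGen φ d n * iterHom φ n d from Finset.prod_range_succ _ _]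
  set E : A := prGen φ d r with hE
  set G : A := iterHom φ r d with hG
  have hJ : (prIdeal φ (Ideal.span {d}) r) ^ 2 = Ideal.span {E ^ 2} := by
    rw [hpr, Ideal.span_singleton_pow]
  have hJK : prIdeal φ (Ideal.span {d}) r * prIdeal φ (Ideal.span {d}) (r + 1) =
      Ideal.span {E ^ 2 * G} := by
    rw [hpr, hpr, Ideal.span_singleton_mul_span_singleton,
      show prGen φ d (r+1) = prGen φ d r * iterHom φ r d from Finset.prod_range_succ _ _,
      show E * (prGen φ d r * iterHom φ r d) = E ^ 2 * G by rw [hE, hG]; ring]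
  obtain ⟨j₀, k₀, hsum, hj₀, hk₀⟩ := S.lemA hr
  constructor
  · intro a
    have h1 : a ^ p - φ a = -((p : A) * δ a) := by linear_combination -(hφ a)
    rw [hJ, hmapr r, h1, hsum]
    have he : -((j₀ + k₀) * δ a) = -(j₀ * δ a) + -(k₀ * δ a) := by ring
    rw [he]
    exact Submodule.add_mem _
      (Submodule.mem_sup_left (neg_mem (Ideal.mul_mem_right _ _ hj₀)))
      (Submodule.mem_sup_right (neg_mem (Ideal.mul_mem_right _ _ hk₀)))
  · set b : A → A := fun a => a ^ p + j₀ * δ a with hbdef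
    have hba : ∀ a, b a = a ^ p + j₀ * δ a := fun a => rfl
    have hbJ : ∀ a, b a - a ^ p ∈ Ideal.span {E ^ 2} := by
      intro a
      have he : b a - a ^ p = j₀ * δ a := by rw [hba]; ring
      rw [he]; exact Ideal.mul_mem_right _ _ hj₀
    have hbK : ∀ a, b a - φ a ∈ Ideal.span {G} := by
      intro a
      have he : b a - φ a = -(k₀ * δ a) := by
        linear_combination hba a - hφ a - δ a * hsum
      rw [he]; exact neg_mem (Ideal.mul_mem_right _ _ hk₀)
    have hGdvdφE : G ∣ φ E := g_dvd_phi_prGen φ d hr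
    have hbJK : ∀ x y : A, x - y ∈ Ideal.span {E ^ 2} →
        b x - b y ∈ Ideal.span {E ^ 2 * G} := by
      intro x y hxy
      obtain ⟨m, hm⟩ := Ideal.mem_span_singleton.1 hxy
      apply S.inter_eq r
      · have h2 : x ^ p - y ^ p ∈ Ideal.span {E ^ 2} := by
          obtain ⟨cc, hcc⟩ := sub_dvd_pow_sub_pow x y p
          exact Ideal.mem_span_singleton.2 ⟨m * cc, by linear_combination hcc + cc * hm⟩
        have he : b x - b y = (b x - x ^ p) + (x ^ p - y ^ p) - (b y - y ^ p) := by ring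
        rw [he]
        exact sub_mem (add_mem (hbJ x) h2) (hbJ y)
      · have hφsub : φ x - φ y = φ E ^ 2 * φ m := by
          have h0 := congrArg φ hm
          rwa [map_sub, map_mul, map_pow] at h0
        obtain ⟨t, ht⟩ := hGdvdφE
        have h3 : φ x - φ y ∈ Ideal.span {G} := by
          refine Ideal.mem_span_singleton.2 ⟨G * t ^ 2 * φ m, ?_⟩
          linear_combination hφsub + (φ m) * (φ E + G * t) * ht
        have he : b x - b y = (b x - φ x) + (φ x - φ y) - (b y - φ y) := by ring
        rw [he]
        exact sub_mem (add_mem (hbK x) h3) (hbK y)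
    have hbmul : ∀ x y : A, b (x * y) - b x * b y ∈ Ideal.span {E ^ 2 * G} := by
      intro x y
      apply S.inter_eq r
      · obtain ⟨m1, hm1⟩ := Ideal.mem_span_singleton.1 (hbJ (x * y))
        obtain ⟨m2, hm2⟩ := Ideal.mem_span_singleton.1 (hbJ x)
        obtain ⟨m3, hm3⟩ := Ideal.mem_span_singleton.1 (hbJ y)
        have hxyp : (x * y) ^ p = x ^ p * y ^ p := mul_pow x y p
        refine Ideal.mem_span_singleton.2
          ⟨m1 - y ^ p * m2 - x ^ p * m3 - E ^ 2 * m2 * m3, ?_⟩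
        linear_combination hm1 - b y * hm2 - x ^ p * hm3 - E ^ 2 * m2 * hm3 + hxyp
      · obtain ⟨n1, hn1⟩ := Ideal.mem_span_singleton.1 (hbK (x * y))
        obtain ⟨n2, hn2⟩ := Ideal.mem_span_singleton.1 (hbK x)
        obtain ⟨n3, hn3⟩ := Ideal.mem_span_singleton.1 (hbK y)
        have hmapmul : φ (x * y) = φ x * φ y := map_mul φ x y
        refine Ideal.mem_span_singleton.2
          ⟨n1 - φ y * n2 - φ x * n3 - G * n2 * n3, ?_⟩
        linear_combination hn1 - b y * hn2 - φ x * hn3 - G * n2 * hn3 + hmapmul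
    have hsound : ∀ (a a' : A),
        (Submodule.quotientRel ((prIdeal φ (Ideal.span {d}) r) ^ 2)) a a' →
        Ideal.Quotient.mk
            (prIdeal φ (Ideal.span {d}) r * prIdeal φ (Ideal.span {d}) (r+1)) (b a) =
          Ideal.Quotient.mk
            (prIdeal φ (Ideal.span {d}) r * prIdeal φ (Ideal.span {d}) (r+1)) (b a') := by
      intro a a' h
      have h1 : a - a' ∈ Ideal.span {E ^ 2} := by
        rw [← hJ]; exact (Submodule.quotientRel_def _).1 h
      refine Ideal.Quotient.eq.2 ?_
      rw [hJK]
      exact hbJK a a' h1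
    set JId := (prIdeal φ (Ideal.span {d}) r) ^ 2 with hJId
    set KId := prIdeal φ (Ideal.span {d}) r * prIdeal φ (Ideal.span {d}) (r+1) with hKId
    set Nfun : (A ⧸ JId) → (A ⧸ KId) :=
      fun x => Quotient.liftOn' x (fun a => Ideal.Quotient.mk KId (b a)) hsound with hNfun
    have hNmk : ∀ a : A, Nfun (Ideal.Quotient.mk JId a) = Ideal.Quotient.mk KId (b a) :=
      fun a => Quotient.liftOn'_mk'' _ hsound a
    refine ⟨{ toFun := Nfun, map_one' := ?_, map_mul' := ?_ }, ?_⟩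
    · have h1 : (1 : A ⧸ JId) = Ideal.Quotient.mk JId 1 := (map_one _).symm
      have h2 : (1 : A ⧸ KId) = Ideal.Quotient.mk KId 1 := (map_one _).symm
      show Nfun 1 = 1
      rw [h1, hNmk 1, h2]
      refine Ideal.Quotient.eq.2 ?_
      rw [hJK]
      apply S.inter_eq r
      · have h3 := hbJ 1; rw [one_pow] at h3; exact h3
      · have h3 := hbK 1; rw [map_one] at h3; exact h3
    · intro x y
      obtain ⟨a, rfl⟩ := Ideal.Quotient.mk_surjective x
      obtain ⟨a', rfl⟩ := Ideal.Quotient.mk_surjective y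
      show Nfun (Ideal.Quotient.mk JId a * Ideal.Quotient.mk JId a') =
        Nfun (Ideal.Quotient.mk JId a) * Nfun (Ideal.Quotient.mk JId a')
      rw [← map_mul, hNmk, hNmk, hNmk, ← map_mul]
      refine Ideal.Quotient.eq.2 ?_
      rw [hJK]
      exact hbmul a a'
    · intro a
      exact ⟨b a, (hNmk a).symm, by rw [hJ]; exact hbJ a,
        by rw [hmapr r]; exact hbK a⟩
end
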